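/- arXiv:1810.03112 — 5 statements merged into one kernel-verified Lean document; each statement's English description precedes it below -/
import Mathlib

section
/- Let z ∈ ℂ \ [0,∞). Then there exist constants 0 < c ≤ C < ∞ such that c ≤ |ω(x,z)| ≤ C for all x ≥ x₁(z), and |∂ω/∂x(x,z)| ≤ C(|p'(x)| + |q'(x)|) for almost every x ≥ x₁(z); consequently the function x ↦ ∂ω/∂x(x,z) is integrable on (x₁(z),∞). -/
open MeasureTheory Filter Set Complex

noncomputable section

/-- The principal-branch square root `ω(x,z) = ((q x − z)/p x)^{1/2}`. -/
def omg (p q : ℝ → ℝ) (z : ℂ) (x : ℝ) : ℂ :=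
  (((q x : ℂ) - z) / (p x : ℂ)) ^ (1 / 2 : ℂ)

/-- `Ω(x,z) = ∫₀ˣ ω(y,z) dy`. -/
def Omg (p q : ℝ → ℝ) (z : ℂ) (x : ℝ) : ℂ :=
  ∫ y in (0:ℝ)..x, omg p q z y

/-- `a(x,z) = exp(−Ω(x,z))`. -/
def aa (p q : ℝ → ℝ) (z : ℂ) (x : ℝ) : ℂ :=
  Complex.exp (-(Omg p q z x))

/-- Assumption (PQ): `p > 0` on `[0,∞)`, locally absolutely continuous with integrable
derivative `p'` and limit `p₀ > 0` at `+∞`; `q` integrable on `(0,x₀)`, locally absolutely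
continuous on `[x₀,∞)` with integrable derivative `q'` there, and `q → 0` at `+∞`.
Absolute continuity is encoded by the fundamental theorem of calculus representation. -/
structure PQData (p p' q q' : ℝ → ℝ) (p₀ x₀ : ℝ) : Prop where
  p_pos : ∀ x : ℝ, 0 ≤ x → 0 < p x
  hp₀ : 0 < p₀
  hx₀ : 0 ≤ x₀
  p_ac : ∀ x : ℝ, 0 ≤ x → p x = p 0 + ∫ t in (0:ℝ)..x, p' t
  p'_int : IntegrableOn p' (Ioi (0:ℝ))
  p_lim : Tendsto p atTop (nhds p₀)
  q_int : IntegrableOn q (Ioo (0:ℝ) x₀)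
  q_ac : ∀ x : ℝ, x₀ ≤ x → q x = q x₀ + ∫ t in x₀..x, q' t
  q'_int : IntegrableOn q' (Ioi x₀)
  q_lim : Tendsto q atTop (nhds (0:ℝ))

/-- `f` (with derivative `f'`) solves `−(p f')' + q f = z f` on `I`:
`f` is differentiable on `I` with derivative `f'`, and `p·f'` is locally absolutely
continuous on `I` with a.e. derivative `(q − z)·f` (encoded via the FTC representation). -/
def IsSol (p q : ℝ → ℝ) (z : ℂ) (I : Set ℝ) (f f' : ℝ → ℂ) : Prop :=
  (∀ x ∈ I, HasDerivWithinAt f (f' x) I x) ∧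
    ∀ x ∈ I, ∀ y ∈ I,
      (p y : ℂ) * f' y - (p x : ℂ) * f' x = ∫ t in x..y, ((q t : ℂ) - z) * f t

/-- `ε(x) = ∫ₓ^∞ (|p'| + |q'|)`. -/
def eps (p' q' : ℝ → ℝ) (x : ℝ) : ℝ :=
  ∫ y in Ioi x, (|p' y| + |q' y|)

/-- The Volterra kernel `G(x,y,z) = a(y,z)² ∫ₓ^y p(s)⁻¹ a(s,z)⁻² ds`. -/
def Gker (p q : ℝ → ℝ) (z : ℂ) (x y : ℝ) : ℂ :=
  aa p q z y ^ 2 * ∫ s in x..y, ((p s : ℂ))⁻¹ * (aa p q z s ^ 2)⁻¹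

/-- `Φ(x,λ) = ∫₀ˣ √(max((λ − q)/p, 0))`. -/
def Phi (p q : ℝ → ℝ) (lam x : ℝ) : ℝ :=
  ∫ y in (0:ℝ)..x, Real.sqrt (max ((lam - q y) / p y) 0)

/-- `K(λ) = exp(−∫₀^∞ √(max((q − λ)/p, 0)))`. -/
def Kc (p q : ℝ → ℝ) (lam : ℝ) : ℝ :=
  Real.exp (-∫ y in Ioi (0:ℝ), Real.sqrt (max ((q y - lam) / p y) 0))

/-- `ξ(x) = θ(x)·∫_ϱ^x θ(y)⁻² p(y)⁻¹ dy`. -/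
def xiFun (p : ℝ → ℝ) (θ : ℝ → ℂ) (ϱ x : ℝ) : ℂ :=
  θ x * ∫ y in ϱ..x, (θ y ^ 2)⁻¹ * ((p y : ℂ))⁻¹

/-- The derivative of `ξ`: `ξ'(x) = θ'(x)·∫_ϱ^x θ⁻² p⁻¹ + θ(x)⁻¹ p(x)⁻¹`. -/
def xiFun' (p : ℝ → ℝ) (θ θ' : ℝ → ℂ) (ϱ x : ℝ) : ℂ :=
  θ' x * (∫ y in ϱ..x, (θ y ^ 2)⁻¹ * ((p y : ℂ))⁻¹) + (θ x)⁻¹ * ((p x : ℂ))⁻¹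


/-- Lebesgue differentiation: the primitive of an integrable function is a.e. differentiable
with derivative the function itself. -/
lemma ae_hasDerivAt_primitive (f : ℝ → ℝ) (hf : Integrable f) (a : ℝ) :
    ∀ᵐ x ∂(volume : Measure ℝ), HasDerivAt (fun y => ∫ t in a..y, f t) (f x) x := by
  filter_upwards [(IsUnifLocDoublingMeasure.vitaliFamily (volume : Measure ℝ)
      1).ae_tendsto_average_norm_sub hf.locallyIntegrable] with x hx
  have hR : Tendsto (fun y => ⨍ t in Icc x y, ‖f t - f x‖) (nhdsWithin x (Ioi x)) (nhds 0) :=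
    hx.comp (Real.tendsto_Icc_vitaliFamily_right x)
  have hL : Tendsto (fun y => ⨍ t in Icc y x, ‖f t - f x‖) (nhdsWithin x (Iio x)) (nhds 0) :=
    hx.comp (Real.tendsto_Icc_vitaliFamily_left x)
  set F : ℝ → ℝ := fun y => ∫ t in a..y, f t with hF
  have key : ∀ u v : ℝ, u < v → |slope F u v - f x| ≤ ⨍ t in Icc u v, ‖f t - f x‖ := by
    intro u v huv
    have hFv : F v - F u = ∫ t in u..v, f t :=
      intervalIntegral.integral_interval_sub_left (hf.intervalIntegrable)
        (hf.intervalIntegrable)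
    have h1 : slope F u v - f x = (v - u)⁻¹ * ∫ t in u..v, (f t - f x) := by
      rw [slope_def_field, div_sub' (by linarith : v - u ≠ 0), div_eq_inv_mul, hFv,
        intervalIntegral.integral_sub (hf.intervalIntegrable)
          (intervalIntegrable_const), intervalIntegral.integral_const, smul_eq_mul]
    rw [h1, setAverage_eq, Real.volume_real_Icc_of_le huv.le, smul_eq_mul,
      abs_mul, _root_.abs_of_nonneg (inv_nonneg.2 (by linarith : (0:ℝ) ≤ v - u))]
    refine mul_le_mul_of_nonneg_left ?_ (inv_nonneg.2 (by linarith : (0:ℝ) ≤ v - u))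
    calc |∫ t in u..v, (f t - f x)| ≤ ∫ t in u..v, |f t - f x| :=
          intervalIntegral.abs_integral_le_integral_abs huv.le
      _ = ∫ t in Icc u v, ‖f t - f x‖ := by
          rw [intervalIntegral.integral_of_le huv.le, ← integral_Icc_eq_integral_Ioc]
          simp [Real.norm_eq_abs]
  rw [hasDerivAt_iff_tendsto_slope, ← nhdsLT_sup_nhdsGT, tendsto_sup]
  constructor
  · rw [tendsto_iff_norm_sub_tendsto_zero]
    refine squeeze_zero' (Eventually.of_forall fun y => norm_nonneg _) ?_ hL
    filter_upwards [self_mem_nhdsWithin] with y (hy : y < x)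
    rw [Real.norm_eq_abs, slope_comm]
    exact key y x hy
  · rw [tendsto_iff_norm_sub_tendsto_zero]
    refine squeeze_zero' (Eventually.of_forall fun y => norm_nonneg _) ?_ hR
    filter_upwards [self_mem_nhdsWithin] with y (hy : x < y)
    rw [Real.norm_eq_abs]
    exact key x y hy

/-- Machinery for a locally absolutely continuous function given by an FTC representation:
continuous extension, a.e. differentiability, and an upper bound. -/
lemma ac_machinery (g g' : ℝ → ℝ) (a : ℝ)
    (g_ac : ∀ x : ℝ, a ≤ x → g x = g a + ∫ t in a..x, g' t)
    (g'_int : IntegrableOn g' (Ioi a)) :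
    ∃ G : ℝ → ℝ, Continuous G ∧ (∀ x : ℝ, a ≤ x → G x = g x) ∧
      (∀ᵐ x ∂(volume : Measure ℝ), a < x → HasDerivAt g (g' x) x) ∧
      (∀ x : ℝ, a ≤ x → g x ≤ g a + ∫ t in Ioi a, |g' t|) := by
  set fg : ℝ → ℝ := (Ioi a).indicator g' with hfgdef
  have hfg : Integrable fg := g'_int.integrable_indicator measurableSet_Ioi
  have hfgeq : ∀ x : ℝ, a ≤ x → (∫ t in a..x, fg t) = ∫ t in a..x, g' t := by
    intro x hx
    rw [intervalIntegral.integral_of_le hx, intervalIntegral.integral_of_le hx,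
      hfgdef, setIntegral_indicator measurableSet_Ioi,
      inter_eq_left.mpr Ioc_subset_Ioi_self]
  refine ⟨fun y => g a + ∫ t in a..y, fg t,
    continuous_const.add (hfg.continuous_primitive a), ?_, ?_, ?_⟩
  · intro x hx
    show g a + (∫ t in a..x, fg t) = g x
    rw [hfgeq x hx, ← g_ac x hx]
  · filter_upwards [ae_hasDerivAt_primitive fg hfg a] with x hx hx0
    have hG : HasDerivAt (fun y => g a + ∫ t in a..y, fg t) (fg x) x := hx.const_add (g a)
    have h1 : fg x = g' x := indicator_of_mem hx0 g'
    have h2 : g =ᶠ[nhds x] (fun y => g a + ∫ t in a..y, fg t) := by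
      filter_upwards [eventually_gt_nhds hx0] with y hy
      show g y = g a + ∫ t in a..y, fg t
      rw [hfgeq y hy.le, ← g_ac y hy.le]
    rw [h1] at hG
    exact hG.congr_of_eventuallyEq h2
  · intro x hx
    rw [g_ac x hx]
    gcongr
    calc (∫ t in a..x, g' t) ≤ |∫ t in a..x, g' t| := le_abs_self _
      _ ≤ ∫ t in a..x, |g' t| := intervalIntegral.abs_integral_le_integral_abs hx
      _ = ∫ t in Ioc a x, |g' t| := intervalIntegral.integral_of_le hx
      _ ≤ ∫ t in Ioi a, |g' t| := by
          refine setIntegral_mono_set g'_int.abs ?_ ?_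
          · exact Eventually.of_forall fun t => abs_nonneg _
          · exact HasSubset.Subset.eventuallyLE Ioc_subset_Ioi_self

/-- A positive lower bound on `p` on `[x₁,∞)`. -/
lemma min_aux (p P : ℝ → ℝ) (x₁ p₀ : ℝ) (hp₀ : 0 < p₀)
    (hPcont : Continuous P) (hPp : ∀ x : ℝ, x₁ ≤ x → P x = p x)
    (hppos : ∀ x : ℝ, x₁ ≤ x → 0 < p x)
    (p_lim : Tendsto p atTop (nhds p₀)) :
    ∃ m : ℝ, 0 < m ∧ ∀ x : ℝ, x₁ ≤ x → m ≤ p x := by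
  obtain ⟨R, hR⟩ := eventually_atTop.mp
    (p_lim.eventually (eventually_gt_nhds (by linarith : p₀/2 < p₀)))
  obtain ⟨xm, hxm, hmin⟩ := (isCompact_Icc (a := x₁) (b := max x₁ R)).exists_isMinOn
    ⟨x₁, left_mem_Icc.2 (le_max_left _ _)⟩ hPcont.continuousOn
  have hPxm : 0 < P xm := by rw [hPp xm hxm.1]; exact hppos xm hxm.1
  refine ⟨min (p₀/2) (P xm), lt_min (by linarith) hPxm, fun x hx => ?_⟩
  by_cases hcase : x ≤ max x₁ R
  · have := hmin ⟨hx, hcase⟩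
    calc min (p₀/2) (P xm) ≤ P xm := min_le_right _ _
      _ ≤ P x := this
      _ = p x := hPp x hx
  · have : R < x := lt_of_le_of_lt (le_max_right x₁ R) (not_le.mp hcase)
    calc min (p₀/2) (P xm) ≤ p₀/2 := min_le_left _ _
      _ ≤ p x := (hR x this.le).le

/-- The candidate derivative of `ω`. -/
def om' (p p' q q' : ℝ → ℝ) (z : ℂ) (x : ℝ) : ℂ :=
  (1 / 2 : ℂ) * ((((q x : ℂ) - z) / (p x : ℂ)) ^ ((1 / 2 : ℂ) - 1)) *
    (((q' x : ℂ) * (p x : ℂ) - ((q x : ℂ) - z) * (p' x : ℂ)) / (p x : ℂ) ^ 2)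

/-- Chain rule for `ω`. -/
lemma deriv_aux (p p' q q' : ℝ → ℝ) (z : ℂ) (x : ℝ)
    (hp : HasDerivAt p (p' x) x) (hq : HasDerivAt q (q' x) x)
    (hpx : 0 < p x) (hslit : ((q x : ℂ) - z) / (p x : ℂ) ∈ Complex.slitPlane) :
    HasDerivAt (omg p q z) (om' p p' q q' z x) x := by
  have hpx0 : ((p x : ℝ) : ℂ) ≠ 0 := by simpa using ne_of_gt hpx
  have hpc : HasDerivAt (fun y => ((p y : ℝ) : ℂ)) ((p' x : ℝ) : ℂ) x := hp.ofReal_comp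
  have hqc : HasDerivAt (fun y => ((q y : ℝ) : ℂ) - z) ((q' x : ℝ) : ℂ) x :=
    hq.ofReal_comp.sub_const z
  have hdiv := hqc.div hpc hpx0
  have h := (Complex.hasStrictDerivAt_cpow_const (c := (1/2 : ℂ)) hslit).hasDerivAt.comp x hdiv
  have heq : omg p q z = fun y => (((q y : ℂ) - z) / (p y : ℂ)) ^ (1 / 2 : ℂ) := rfl
  rw [heq, om']
  convert h using 1
  all_goals rfl

/-- Basic estimates on `(q x − z)/p x` for `x ≥ x₁`. -/
lemma slit_aux (p q : ℝ → ℝ) (z : ℂ) (hz : ∀ t : ℝ, 0 ≤ t → (t : ℂ) ≠ z)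
    (x : ℝ) (hq : |q x| ≤ ‖z‖ / 2) (hp : 0 < p x) (m M : ℝ)
    (hm : m ≤ p x) (hM : p x ≤ M) (hm0 : 0 < m) :
    ((q x : ℂ) - z) / (p x : ℂ) ∈ Complex.slitPlane ∧
    ‖z‖ / (2 * M) ≤ ‖((q x : ℂ) - z) / (p x : ℂ)‖ ∧
    ‖((q x : ℂ) - z) / (p x : ℂ)‖ ≤ 3/2 * ‖z‖ / m ∧
    ‖omg p q z x‖ = ‖((q x : ℂ) - z) / (p x : ℂ)‖ ^ (1/2 : ℝ) ∧
    ‖(q x : ℂ) - z‖ ≤ 3/2 * ‖z‖ := by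
  have hz0 : (0:ℂ) ≠ z := by simpa using hz 0 le_rfl
  have hznorm : 0 < ‖z‖ := by simpa [norm_pos_iff] using hz0.symm
  have hqx : ‖((q x : ℝ) : ℂ)‖ = |q x| := by rw [Complex.norm_real, Real.norm_eq_abs]
  have hlb : ‖z‖/2 ≤ ‖(q x : ℂ) - z‖ := by
    have h1 : ‖z‖ - ‖((q x : ℝ) : ℂ)‖ ≤ ‖z - (q x : ℂ)‖ := norm_sub_norm_le _ _
    rw [norm_sub_rev] at h1
    rw [hqx] at h1
    linarith
  have hub : ‖(q x : ℂ) - z‖ ≤ 3/2 * ‖z‖ := by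
    have h1 : ‖(q x : ℂ) - z‖ ≤ ‖((q x : ℝ) : ℂ)‖ + ‖z‖ := norm_sub_le _ _
    rw [hqx] at h1; linarith
  have hslit : ((q x : ℂ) - z) / (p x : ℂ) ∈ Complex.slitPlane := by
    rw [Complex.mem_slitPlane_iff]
    rcases eq_or_ne z.im 0 with him | him
    · left
      have hzre : z = (z.re : ℂ) := by
        apply Complex.ext <;> simp [him]
      have hrneg : z.re < 0 := by
        by_contra h
        exact hz z.re (not_lt.mp h) hzre.symm
      have hnz : ‖z‖ = -z.re := by
        calc ‖z‖ = ‖((z.re : ℝ) : ℂ)‖ := by rw [← hzre]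
          _ = |z.re| := by rw [Complex.norm_real, Real.norm_eq_abs]
          _ = -z.re := abs_of_neg hrneg
      rw [Complex.div_ofReal_re]
      have hre : ((q x : ℂ) - z).re = q x - z.re := by simp
      rw [hre]
      have := abs_le.mp hq
      apply div_pos (by linarith) hp
    · right
      rw [Complex.div_ofReal_im]
      have : ((q x : ℂ) - z).im = -z.im := by simp
      rw [this]
      exact div_ne_zero (neg_ne_zero.mpr him) (ne_of_gt hp)
  have habs : ‖((q x : ℂ) - z) / (p x : ℂ)‖ = ‖(q x : ℂ) - z‖ / p x := by
    rw [norm_div, Complex.norm_real, Real.norm_eq_abs, abs_of_pos hp]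
  have h5 : ‖z‖ / (2 * M) ≤ ‖((q x : ℂ) - z) / (p x : ℂ)‖ := by
    rw [habs]
    calc ‖z‖ / (2 * M) = (‖z‖/2) / M := by ring
      _ ≤ ‖(q x : ℂ) - z‖ / p x := by
          apply div_le_div₀ (norm_nonneg _) hlb (lt_of_lt_of_le hm0 hm) hM
  have h6 : ‖((q x : ℂ) - z) / (p x : ℂ)‖ ≤ 3/2 * ‖z‖ / m := by
    rw [habs]
    apply div_le_div₀ (by positivity) hub hm0 hm
  have h7 : ‖omg p q z x‖ = ‖((q x : ℂ) - z) / (p x : ℂ)‖ ^ (1/2 : ℝ) := by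
    rw [omg]
    rw [show (1/2 : ℂ) = ((1/2 : ℝ) : ℂ) by norm_num]
    exact norm_cpow_real _ _
  exact ⟨hslit, h5, h6, h7, hub⟩

/-- Pointwise bound on `‖ω'‖`. -/
lemma bound_aux (p p' q q' : ℝ → ℝ) (z : ℂ) (x : ℝ) (m M L : ℝ) (hm0 : 0 < m) (hL : 0 < L)
    (hm : m ≤ p x) (hM : p x ≤ M) (hpx : 0 < p x)
    (habs : L ≤ ‖((q x : ℂ) - z) / (p x : ℂ)‖)
    (hub : ‖(q x : ℂ) - z‖ ≤ 3/2 * ‖z‖) :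
    ‖om' p p' q q' z x‖ ≤
      (1/2) * L ^ (-(1/2) : ℝ) * (max M (3/2 * ‖z‖) / m^2) * (|p' x| + |q' x|) := by
  have h1 : ‖(((q x : ℂ) - z) / (p x : ℂ)) ^ ((1/2 : ℂ) - 1)‖ ≤ L ^ (-(1/2) : ℝ) := by
    rw [show ((1/2 : ℂ) - 1) = ((-(1/2) : ℝ) : ℂ) by norm_num]
    rw [norm_cpow_real]
    exact Real.rpow_le_rpow_of_nonpos hL habs (by norm_num)
  have h2 : ‖((q' x : ℂ) * (p x : ℂ) - ((q x : ℂ) - z) * (p' x : ℂ)) / (p x : ℂ) ^ 2‖ ≤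
      (M * |q' x| + (3/2 * ‖z‖) * |p' x|) / m^2 := by
    rw [norm_div, norm_pow, Complex.norm_real, Real.norm_eq_abs, abs_of_pos hpx]
    have hM0 : (0:ℝ) < M := lt_of_lt_of_le hpx hM
    apply div_le_div₀ (by nlinarith [abs_nonneg (q' x), abs_nonneg (p' x), norm_nonneg z]) ?_
      (by positivity) (by nlinarith)
    calc ‖(q' x : ℂ) * (p x : ℂ) - ((q x : ℂ) - z) * (p' x : ℂ)‖
        ≤ ‖(q' x : ℂ) * (p x : ℂ)‖ + ‖((q x : ℂ) - z) * (p' x : ℂ)‖ := norm_sub_le _ _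
      _ = |q' x| * p x + ‖(q x : ℂ) - z‖ * |p' x| := by
          rw [norm_mul, norm_mul, Complex.norm_real, Complex.norm_real, Complex.norm_real,
            Real.norm_eq_abs, Real.norm_eq_abs, Real.norm_eq_abs, abs_of_pos hpx]
      _ ≤ M * |q' x| + (3/2 * ‖z‖) * |p' x| := by
          have h3 : |q' x| * p x ≤ M * |q' x| := by
            rw [mul_comm M]
            exact mul_le_mul_of_nonneg_left hM (abs_nonneg _)
          have h4 : ‖(q x : ℂ) - z‖ * |p' x| ≤ (3/2 * ‖z‖) * |p' x| :=
            mul_le_mul_of_nonneg_right hub (abs_nonneg _)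
          linarith
  calc ‖om' p p' q q' z x‖
      = (1/2) * ‖(((q x : ℂ) - z) / (p x : ℂ)) ^ ((1/2 : ℂ) - 1)‖ *
        ‖((q' x : ℂ) * (p x : ℂ) - ((q x : ℂ) - z) * (p' x : ℂ)) / (p x : ℂ) ^ 2‖ := by
        rw [om', norm_mul, norm_mul]
        norm_num
    _ ≤ (1/2) * L ^ (-(1/2) : ℝ) * ((M * |q' x| + (3/2 * ‖z‖) * |p' x|) / m^2) := by
        apply mul_le_mul (by apply mul_le_mul_of_nonneg_left h1; norm_num) h2
          (norm_nonneg _) (by positivity)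
    _ ≤ (1/2) * L ^ (-(1/2) : ℝ) * (max M (3/2 * ‖z‖) / m^2) * (|p' x| + |q' x|) := by
        have hMle : M ≤ max M (3/2 * ‖z‖) := le_max_left _ _
        have hzle : 3/2 * ‖z‖ ≤ max M (3/2 * ‖z‖) := le_max_right _ _
        have hLp : (0:ℝ) ≤ L ^ (-(1/2) : ℝ) := (Real.rpow_pos_of_pos hL _).le
        have hS : M * |q' x| + (3/2 * ‖z‖) * |p' x| ≤
            max M (3/2 * ‖z‖) * (|p' x| + |q' x|) := by
          nlinarith [abs_nonneg (p' x), abs_nonneg (q' x)]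
        calc (1/2) * L ^ (-(1/2) : ℝ) * ((M * |q' x| + (3/2 * ‖z‖) * |p' x|) / m^2)
            ≤ (1/2) * L ^ (-(1/2) : ℝ) * ((max M (3/2 * ‖z‖) * (|p' x| + |q' x|)) / m^2) :=
              mul_le_mul_of_nonneg_left (div_le_div_of_nonneg_right hS (by positivity))
                (mul_nonneg (by norm_num) hLp)
          _ = (1/2) * L ^ (-(1/2) : ℝ) * (max M (3/2 * ‖z‖) / m^2) * (|p' x| + |q' x|) := by
              ring

/-- Measurability of `ω'` on `(x₁,∞)`. -/
lemma meas_aux (p p' q q' : ℝ → ℝ) (z : ℂ) (x₁ : ℝ) (P Q : ℝ → ℝ)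
    (hPcont : Continuous P) (hQcont : Continuous Q)
    (hPp : ∀ x, x₁ ≤ x → P x = p x) (hQq : ∀ x, x₁ ≤ x → Q x = q x)
    (hp'm : AEStronglyMeasurable p' (volume.restrict (Ioi x₁)))
    (hq'm : AEStronglyMeasurable q' (volume.restrict (Ioi x₁)))
    (hne : ∀ x, x₁ ≤ x → (((q x : ℂ) - z) / (p x : ℂ)) ≠ 0) :
    AEStronglyMeasurable (om' p p' q q' z) (volume.restrict (Ioi x₁)) := by
  have hpm : AEMeasurable p (volume.restrict (Ioi x₁)) := by
    refine hPcont.aemeasurable.congr ?_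
    refine (ae_restrict_iff' measurableSet_Ioi).2 (Eventually.of_forall fun x hx => ?_)
    exact hPp x (le_of_lt hx)
  have hqm : AEMeasurable q (volume.restrict (Ioi x₁)) := by
    refine hQcont.aemeasurable.congr ?_
    refine (ae_restrict_iff' measurableSet_Ioi).2 (Eventually.of_forall fun x hx => ?_)
    exact hQq x (le_of_lt hx)
  have hg : AEMeasurable (fun x => ((q x : ℂ) - z) / (p x : ℂ)) (volume.restrict (Ioi x₁)) :=
    ((Complex.measurable_ofReal.comp_aemeasurable hqm).sub aemeasurable_const).div
      (Complex.measurable_ofReal.comp_aemeasurable hpm)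
  have hcp : AEMeasurable (fun x => (((q x : ℂ) - z) / (p x : ℂ)) ^ ((1 / 2 : ℂ) - 1))
      (volume.restrict (Ioi x₁)) := by
    refine AEMeasurable.congr (f := fun x =>
        Complex.exp (Complex.log (((q x : ℂ) - z) / (p x : ℂ)) * ((1 / 2 : ℂ) - 1))) ?_ ?_
    · exact Complex.measurable_exp.comp_aemeasurable
        ((Complex.measurable_log.comp_aemeasurable hg).mul aemeasurable_const)
    · refine (ae_restrict_iff' measurableSet_Ioi).2 (Eventually.of_forall fun x hx => ?_)
      exact (Complex.cpow_def_of_ne_zero (hne x (le_of_lt hx)) _).symm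
  have hd : AEMeasurable (fun x =>
      ((q' x : ℂ) * (p x : ℂ) - ((q x : ℂ) - z) * (p' x : ℂ)) / (p x : ℂ) ^ 2)
      (volume.restrict (Ioi x₁)) := by
    refine AEMeasurable.div ?_ ((Complex.measurable_ofReal.comp_aemeasurable hpm).pow_const 2)
    exact ((Complex.measurable_ofReal.comp_aemeasurable hq'm.aemeasurable).mul
        (Complex.measurable_ofReal.comp_aemeasurable hpm)).sub
      (((Complex.measurable_ofReal.comp_aemeasurable hqm).sub aemeasurable_const).mul
        (Complex.measurable_ofReal.comp_aemeasurable hp'm.aemeasurable))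
  exact ((aemeasurable_const.mul hcp).mul hd).aestronglyMeasurable

/-- For `z ∈ ℂ \ [0,∞)` there are constants `0 < c ≤ C < ∞` with
`c ≤ |ω(x,z)| ≤ C` for all `x ≥ x₁(z)`, `|∂ω/∂x(x,z)| ≤ C(|p'(x)| + |q'(x)|)` for a.e.
`x ≥ x₁(z)`, and `∂ω/∂x(·,z)` is integrable on `(x₁(z),∞)`. -/
theorem statement0 (p p' q q' : ℝ → ℝ) (p₀ x₀ : ℝ)
    (hPQ : PQData p p' q q' p₀ x₀)
    (z : ℂ) (hz : ∀ t : ℝ, 0 ≤ t → (t : ℂ) ≠ z)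
    (x₁ : ℝ) (hx₁ : x₀ ≤ x₁) (hx₁q : ∀ x : ℝ, x₁ ≤ x → |q x| ≤ ‖z‖ / 2) :
    ∃ (c C : ℝ) (ω' : ℝ → ℂ), 0 < c ∧ c ≤ C ∧
      (∀ x : ℝ, x₁ ≤ x → c ≤ ‖omg p q z x‖ ∧ ‖omg p q z x‖ ≤ C) ∧
      (∀ᵐ x ∂(volume : Measure ℝ), x₁ ≤ x → HasDerivAt (omg p q z) (ω' x) x) ∧
      (∀ᵐ x ∂(volume : Measure ℝ), x₁ ≤ x → ‖ω' x‖ ≤ C * (|p' x| + |q' x|)) ∧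
      IntegrableOn ω' (Ioi x₁) := by
  have hx₁0 : 0 ≤ x₁ := hPQ.hx₀.trans hx₁
  obtain ⟨P, hPcont, hPp, hpd, hMb⟩ := ac_machinery p p' 0 (fun x hx => hPQ.p_ac x hx) hPQ.p'_int
  obtain ⟨Q, hQcont, hQq, hqd, -⟩ := ac_machinery q q' x₀ (fun x hx => hPQ.q_ac x hx) hPQ.q'_int
  set M : ℝ := p 0 + ∫ t in Ioi (0:ℝ), |p' t| with hMdef
  have hM : ∀ x : ℝ, 0 ≤ x → p x ≤ M := hMb
  obtain ⟨m, hm0, hm⟩ := min_aux p P x₁ p₀ hPQ.hp₀ hPcont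
    (fun x hx => hPp x (hx₁0.trans hx)) (fun x hx => hPQ.p_pos x (hx₁0.trans hx)) hPQ.p_lim
  have hz0 : (0:ℂ) ≠ z := by simpa using hz 0 le_rfl
  have hznorm : 0 < ‖z‖ := by simpa [norm_pos_iff] using hz0.symm
  have hM0 : 0 < M := lt_of_lt_of_le (hPQ.p_pos 0 le_rfl) (hM 0 le_rfl)
  set L : ℝ := ‖z‖ / (2 * M) with hLdef
  have hL : 0 < L := by rw [hLdef]; positivity
  have key : ∀ x : ℝ, x₁ ≤ x →
      ((q x : ℂ) - z) / (p x : ℂ) ∈ Complex.slitPlane ∧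
      L ≤ ‖((q x : ℂ) - z) / (p x : ℂ)‖ ∧
      ‖((q x : ℂ) - z) / (p x : ℂ)‖ ≤ 3/2 * ‖z‖ / m ∧
      ‖omg p q z x‖ = ‖((q x : ℂ) - z) / (p x : ℂ)‖ ^ (1/2 : ℝ) ∧
      ‖(q x : ℂ) - z‖ ≤ 3/2 * ‖z‖ :=
    fun x hx => slit_aux p q z hz x (hx₁q x hx) (hPQ.p_pos x (hx₁0.trans hx)) m M
      (hm x hx) (hM x (hx₁0.trans hx)) hm0
  have hne : ∀ x : ℝ, x₁ ≤ x → (((q x : ℂ) - z) / (p x : ℂ)) ≠ 0 := by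
    intro x hx h0
    have h := (key x hx).2.1
    rw [h0] at h
    simp only [norm_zero] at h
    linarith
  set c : ℝ := L ^ (1/2 : ℝ) with hcdef
  set Cb : ℝ := (3/2 * ‖z‖ / m) ^ (1/2 : ℝ) with hCbdef
  set C₂ : ℝ := (1/2) * L ^ (-(1/2) : ℝ) * (max M (3/2 * ‖z‖) / m^2) with hC₂def
  set C : ℝ := max c (max Cb C₂) with hCdef
  have hc0 : 0 < c := Real.rpow_pos_of_pos hL _
  have hcC : c ≤ C := le_max_left _ _
  have hCbC : Cb ≤ C := le_trans (le_max_left _ _) (le_max_right _ _)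
  have hC₂C : C₂ ≤ C := le_trans (le_max_right _ _) (le_max_right _ _)
  have hbound : ∀ x : ℝ, x₁ ≤ x → ‖om' p p' q q' z x‖ ≤ C * (|p' x| + |q' x|) := by
    intro x hx
    have h := bound_aux p p' q q' z x m M L hm0 hL (hm x hx) (hM x (hx₁0.trans hx))
      (hPQ.p_pos x (hx₁0.trans hx)) (key x hx).2.1 (key x hx).2.2.2.2
    exact h.trans (mul_le_mul_of_nonneg_right hC₂C (by positivity))
  refine ⟨c, C, om' p p' q q' z, hc0, hcC, ?_, ?_, ?_, ?_⟩
  · intro x hx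
    obtain ⟨-, h5, h6, h7, -⟩ := key x hx
    constructor
    · rw [h7, hcdef]
      exact Real.rpow_le_rpow hL.le h5 (by norm_num)
    · rw [h7]
      refine le_trans ?_ hCbC
      rw [hCbdef]
      exact Real.rpow_le_rpow (norm_nonneg _) h6 (by norm_num)
  · have hsing : ∀ᵐ x : ℝ ∂(volume : Measure ℝ), x ≠ x₁ := by
      rw [ae_iff]
      simp only [ne_eq, not_not, setOf_eq_eq_singleton]
      exact measure_singleton x₁
    filter_upwards [hpd, hqd, hsing] with x hpx hqx hx0 hx
    have hx1 : x₁ < x := lt_of_le_of_ne hx (Ne.symm hx0)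
    exact deriv_aux p p' q q' z x (hpx (lt_of_le_of_lt hx₁0 hx1))
      (hqx (lt_of_le_of_lt hx₁ hx1)) (hPQ.p_pos x (hx₁0.trans hx)) (key x hx).1
  · exact Eventually.of_forall hbound
  · have hint : IntegrableOn (fun x => C * (|p' x| + |q' x|)) (Ioi x₁) :=
      (((hPQ.p'_int.mono_set (Ioi_subset_Ioi hx₁0)).abs.add
        ((hPQ.q'_int.mono_set (Ioi_subset_Ioi hx₁)).abs)).const_mul C)
    refine Integrable.mono' hint ?_ ?_
    · exact meas_aux p p' q q' z x₁ P Q hPcont hQcont (fun x hx => hPp x (hx₁0.trans hx))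
        (fun x hx => hQq x (hx₁.trans hx))
        (hPQ.p'_int.mono_set (Ioi_subset_Ioi hx₁0)).aestronglyMeasurable
        (hPQ.q'_int.mono_set (Ioi_subset_Ioi hx₁)).aestronglyMeasurable hne
    · refine (ae_restrict_iff' measurableSet_Ioi).2 (Eventually.of_forall fun x hx => ?_)
      exact hbound x (le_of_lt hx)


end
end

section
/- Let z ∈ ℂ \ [0,∞). Then there is a constant C < ∞ such that |G(x,y,z)| ≤ C for all y ≥ x ≥ x₁(z). -/
open MeasureTheory Filter Set Complex

noncomputable section

lemma sqrtc_measurable : Measurable fun w : ℂ => w ^ (1/2 : ℂ) := by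
  have h : (fun w : ℂ => w ^ (1/2:ℂ))
      = fun w => if w = 0 then 0 else Complex.exp (Complex.log w * (1/2)) := by
    funext w
    by_cases h : w = 0
    · simp [h, Complex.zero_cpow (by norm_num : (1/2:ℂ) ≠ 0)]
    · simp [Complex.cpow_def_of_ne_zero h, h]
  rw [h]
  exact Measurable.ite (measurableSet_eq) measurable_const
    ((Complex.measurable_log.mul_const _).cexp)

lemma sqrtc_re_nonneg (w : ℂ) : 0 ≤ (w ^ (1/2:ℂ)).re := by
  by_cases h : w = 0
  · simp [h, Complex.zero_cpow (by norm_num : (1/2:ℂ) ≠ 0)]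
  · rw [Complex.cpow_def_of_ne_zero h, Complex.exp_re]
    have him : (Complex.log w * (1/2)).im = w.arg / 2 := by
      simp [Complex.mul_im, Complex.log_im]
      ring
    rw [him]
    have h1 : -(Real.pi/2) ≤ w.arg / 2 := by
      have := Complex.neg_pi_lt_arg w; linarith
    have h2 : w.arg / 2 ≤ Real.pi/2 := by
      have := Complex.arg_le_pi w; linarith
    have := Real.cos_nonneg_of_mem_Icc (x := w.arg/2) ⟨h1, h2⟩
    positivity

lemma sqrtc_sq (w : ℂ) (hw : w ≠ 0) : (w ^ (1/2:ℂ))^2 = w := by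
  have h : (1/2 : ℂ) = ((2:ℕ) : ℂ)⁻¹ := by norm_num
  rw [h]
  exact Complex.cpow_nat_inv_pow w two_ne_zero

lemma sqrtc_re_sq (w : ℂ) : ((w ^ (1/2:ℂ)).re)^2 = (‖w‖ + w.re)/2 := by
  by_cases h : w = 0
  · simp [h, Complex.zero_cpow (by norm_num : (1/2:ℂ) ≠ 0)]
  · set u := w ^ (1/2:ℂ) with hu
    have h2 : u^2 = w := sqrtc_sq w h
    have hre : w.re = u.re^2 - u.im^2 := by
      rw [← h2]; simp [pow_two, Complex.mul_re]
    have habs : ‖w‖ = u.re^2 + u.im^2 := by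
      rw [← h2]
      rw [norm_pow, Complex.sq_norm, Complex.normSq_apply]; ring
    rw [hre, habs]; ring

lemma sqrtc_abs (w : ℂ) : ‖w ^ (1/2:ℂ)‖ = Real.sqrt ‖w‖ := by
  by_cases h : w = 0
  · simp [h, Complex.zero_cpow (by norm_num : (1/2:ℂ) ≠ 0)]
  · rw [Complex.norm_cpow_of_ne_zero h]
    simp [Real.sqrt_eq_rpow]

lemma sqrt_le_one_add (u : ℝ) (hu : 0 ≤ u) : Real.sqrt u ≤ 1 + u := by
  nlinarith [Real.sq_sqrt hu, Real.sqrt_nonneg u, sq_nonneg (Real.sqrt u - 1)]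

lemma contWithinAt_Ici_of_Icc {E : Type*} [TopologicalSpace E] {f : ℝ → E} {c x : ℝ}
    (_hx : c ≤ x) (h : ContinuousWithinAt f (Icc c (x+1)) x) :
    ContinuousWithinAt f (Ici c) x := by
  refine h.mono_of_mem_nhdsWithin (mem_nhdsWithin.2 ⟨Iio (x+1), isOpen_Iio, by simp, ?_⟩)
  rintro y ⟨hy1, hy2⟩
  exact ⟨hy2, le_of_lt hy1⟩

lemma contOn_of_FTC (g g' : ℝ → ℝ) (c : ℝ)
    (hac : ∀ x, c ≤ x → g x = g c + ∫ t in c..x, g' t)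
    (hint : IntegrableOn g' (Ioi c)) : ContinuousOn g (Ici c) := by
  intro x hx
  have hxc : c ≤ x := hx
  have hI : IntegrableOn g' (Icc c (x+1)) := by
    rw [integrableOn_Icc_iff_integrableOn_Ioc]
    exact hint.mono_set Ioc_subset_Ioi_self
  have hI' : IntegrableOn g' (uIcc c (x+1)) := by
    rwa [uIcc_of_le (by linarith)]
  have h2 : ContinuousOn (fun t => g c + ∫ s in c..t, g' s) (Icc c (x+1)) := by
    have := intervalIntegral.continuousOn_primitive_interval hI'
    rw [uIcc_of_le (by linarith)] at this
    exact continuousOn_const.add this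
  refine contWithinAt_Ici_of_Icc hxc ?_
  exact (h2 x ⟨hxc, by linarith⟩).congr (fun y hy => hac y hy.1) (hac x hxc)

lemma Fker_def (p q : ℝ → ℝ) (z : ℂ) (x y : ℝ) :
    Gker p q z x y = aa p q z y ^ 2 * ∫ s in x..y, ((p s : ℂ))⁻¹ * (aa p q z s ^ 2)⁻¹ := rfl

set_option maxHeartbeats 1000000 in
/-- the Volterra kernel is uniformly bounded:
`|G(x,y,z)| ≤ C` for all `y ≥ x ≥ x₁(z)`. -/
theorem statement5 (p p' q q' : ℝ → ℝ) (p₀ x₀ : ℝ)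
    (hPQ : PQData p p' q q' p₀ x₀)
    (z : ℂ) (hz : ∀ t : ℝ, 0 ≤ t → (t : ℂ) ≠ z)
    (x₁ : ℝ) (hx₁ : x₀ ≤ x₁) (hx₁q : ∀ x : ℝ, x₁ ≤ x → |q x| ≤ ‖z‖ / 2) :
    ∃ C : ℝ, ∀ x y : ℝ, x₁ ≤ x → x ≤ y → ‖Gker p q z x y‖ ≤ C := by
  obtain ⟨p_pos, hp₀, hx₀, p_ac, p'_int, p_lim, q_int, q_ac, q'_int, q_lim⟩ := hPQ
  have hz0 : z ≠ 0 := fun h => hz 0 le_rfl (by simp [h])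
  have hznorm : 0 < ‖z‖ := norm_pos_iff.mpr hz0
  have hx₁0 : (0:ℝ) ≤ x₁ := le_trans hx₀ hx₁
  have hpcont : ContinuousOn p (Ici (0:ℝ)) := contOn_of_FTC p p' 0 (fun x hx => p_ac x hx) p'_int
  have hqcont : ContinuousOn q (Ici x₀) := contOn_of_FTC q q' x₀ (fun x hx => q_ac x hx) q'_int
  -- upper bound for p
  obtain ⟨M, hM0, hM⟩ : ∃ M : ℝ, 0 < M ∧ ∀ x : ℝ, 0 ≤ x → p x ≤ M := by
    have hint0 : (0:ℝ) ≤ ∫ t in Ioi (0:ℝ), |p' t| := integral_nonneg fun t => abs_nonneg _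
    refine ⟨p 0 + ∫ t in Ioi (0:ℝ), |p' t|,
      add_pos_of_pos_of_nonneg (p_pos 0 le_rfl) hint0, ?_⟩
    intro x hx
    rw [p_ac x hx]
    have h1 : ∫ t in (0:ℝ)..x, p' t ≤ ∫ t in Ioi (0:ℝ), |p' t| := by
      calc ∫ t in (0:ℝ)..x, p' t ≤ |∫ t in (0:ℝ)..x, p' t| := le_abs_self _
        _ ≤ ∫ t in (0:ℝ)..x, |p' t| := intervalIntegral.abs_integral_le_integral_abs hx
        _ = ∫ t in Ioc 0 x, |p' t| := intervalIntegral.integral_of_le hx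
        _ ≤ ∫ t in Ioi 0, |p' t| := by
            refine setIntegral_mono_set p'_int.abs ?_ ?_
            · exact Filter.Eventually.of_forall fun t => abs_nonneg _
            · exact HasSubset.Subset.eventuallyLE Ioc_subset_Ioi_self
    linarith
  -- lower bound for p
  obtain ⟨m, hm0, hm⟩ : ∃ m : ℝ, 0 < m ∧ ∀ x : ℝ, 0 ≤ x → m ≤ p x := by
    have hev : ∀ᶠ x in atTop, p₀/2 < p x := p_lim.eventually_const_lt (by linarith)
    obtain ⟨X, hX⟩ := Filter.eventually_atTop.1 hev
    have hne : (Icc (0:ℝ) (max X 0)).Nonempty := ⟨0, le_refl 0, le_max_right _ _⟩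
    obtain ⟨t, ht, hmin⟩ := isCompact_Icc.exists_isMinOn hne
      (hpcont.mono (fun y hy => hy.1))
    refine ⟨min (p t) (p₀/2), lt_min (p_pos t ht.1) (by linarith), ?_⟩
    intro x hx
    rcases le_total x (max X 0) with h | h
    · exact le_trans (min_le_left _ _) (isMinOn_iff.1 hmin x ⟨hx, h⟩)
    · exact le_trans (min_le_right _ _) (le_of_lt (hX x (le_trans (le_max_left _ _) h)))
  set ww : ℝ → ℂ := fun s => (((q s : ℂ)) - z) / ((p s : ℂ)) with hww
  have homg : ∀ s, omg p q z s = ww s ^ (1/2:ℂ) := fun s => rfl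
  have habs_le : ∀ s : ℝ, 0 ≤ s → ‖ww s‖ ≤ (|q s| + ‖z‖)/m := by
    intro s hs
    have h1 : ‖(q s:ℂ) - z‖ ≤ |q s| + ‖z‖ := by
      calc ‖(q s:ℂ) - z‖ = ‖(q s:ℂ) - z‖ := rfl
        _ ≤ ‖((q s : ℝ):ℂ)‖ + ‖z‖ := norm_sub_le _ _
        _ = |q s| + ‖z‖ := by rw [Complex.norm_real, Real.norm_eq_abs]
    have h2 : ‖((p s : ℂ))‖ = p s := by
      rw [Complex.norm_real, Real.norm_eq_abs, abs_of_pos (p_pos s hs)]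
    rw [hww]
    simp only [norm_div]
    rw [h2]
    exact div_le_div₀ (by positivity) h1 hm0 (hm s hs)
  -- the lower bound δ on the real part of ω
  obtain ⟨δ, hδ0, hδ⟩ : ∃ δ : ℝ, 0 < δ ∧ ∀ s, x₁ ≤ s → δ ≤ (omg p q z s).re := by
    have key : ∃ c : ℝ, 0 < c ∧ ∀ s, x₁ ≤ s → c ≤ ‖ww s‖ + (ww s).re := by
      by_cases him : z.im = 0
      · have hzre : z = ((z.re : ℝ) : ℂ) := by
          apply Complex.ext <;> simp [him]
        have hzreneg : z.re < 0 := by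
          by_contra hc
          push_neg at hc
          exact hz z.re hc hzre.symm
        have hnz : ‖z‖ = -z.re := by
          have h1 : ‖z‖ = |z.re| := by
            conv_lhs => rw [hzre]
            rw [Complex.norm_real, Real.norm_eq_abs]
          rw [h1, abs_of_neg hzreneg]
        refine ⟨‖z‖/(2*M), by positivity, ?_⟩
        intro s hs
        have hs0 : 0 ≤ s := le_trans hx₁0 hs
        have hre : (ww s).re = (q s - z.re)/(p s) := by
          rw [hww]
          simp [Complex.div_ofReal_re]
        have hq2 : |q s| ≤ ‖z‖/2 := hx₁q s hs
        have hnum : ‖z‖/2 ≤ q s - z.re := by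
          have hq3 : -(‖z‖/2) ≤ q s := neg_le_of_abs_le hq2
          rw [hnz] at hq3 ⊢
          linarith
        have h2 : ‖z‖/(2*M) ≤ (ww s).re := by
          rw [hre]
          calc ‖z‖/(2*M) = (‖z‖/2)/M := by ring
            _ ≤ (q s - z.re)/(p s) := div_le_div₀ (by linarith) hnum (p_pos s hs0) (hM s hs0)
        have := norm_nonneg (ww s)
        linarith
      · refine ⟨(z.im)^2*m/(3*‖z‖*M^2), by positivity, ?_⟩
        intro s hs
        have hs0 : 0 ≤ s := le_trans hx₁0 hs
        have hq2 : |q s| ≤ ‖z‖/2 := hx₁q s hs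
        have hup : ‖ww s‖ ≤ 3*‖z‖/(2*m) := by
          calc ‖ww s‖ ≤ (|q s| + ‖z‖)/m := habs_le s hs0
            _ ≤ (‖z‖/2 + ‖z‖)/m := by gcongr
            _ = 3*‖z‖/(2*m) := by ring
        have him' : (ww s).im = -z.im/(p s) := by
          rw [hww]
          simp [Complex.div_ofReal_im]
        have hps := p_pos s hs0
        have himsq : (z.im)^2/M^2 ≤ ((ww s).im)^2 := by
          rw [him', div_pow, neg_sq]
          rw [div_le_div_iff₀ (by positivity) (pow_pos hps 2)]
          nlinarith [hM s hs0, hps, sq_nonneg z.im, sq_nonneg (z.im * (M - p s)),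
            sq_nonneg (z.im * (M + p s))]
        have hwwne : ww s ≠ 0 := by
          intro hcon
          have h0 : (ww s).im = 0 := by rw [hcon]; simp
          rw [him'] at h0
          rcases div_eq_zero_iff.mp h0 with h | h
          · exact him (by linarith [neg_eq_zero.mp h])
          · exact hps.ne' h
        have hA0 : 0 < ‖ww s‖ := norm_pos_iff.mpr hwwne
        set A := ‖ww s‖ with hA
        set r := (ww s).re with hr
        set i := (ww s).im with hi
        have hA2 : A^2 = r^2 + i^2 := by
          rw [hA, hr, hi, Complex.sq_norm, Complex.normSq_apply]; ring
        have step1 : i^2 ≤ (A + r)*(2*A) := by nlinarith [sq_nonneg (r + A)]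
        have step2 : (z.im)^2*m/(3*‖z‖*M^2) * (2*A) ≤ i^2 := by
          have h2A : 2*A ≤ 3*‖z‖/m := by
            rw [div_eq_mul_inv]
            calc 2*A ≤ 2*(3*‖z‖/(2*m)) := by linarith
              _ = 3*‖z‖*m⁻¹ := by ring
          calc (z.im)^2*m/(3*‖z‖*M^2) * (2*A) ≤ (z.im)^2*m/(3*‖z‖*M^2) * (3*‖z‖/m) := by
                apply mul_le_mul_of_nonneg_left h2A (by positivity)
            _ = (z.im)^2/M^2 := by
                rw [div_mul_div_comm, div_eq_div_iff (by positivity) (by positivity)]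
                ring
            _ ≤ i^2 := himsq
        exact le_of_mul_le_mul_right (le_trans step2 step1) (by positivity)
    obtain ⟨c, hc0, hc⟩ := key
    refine ⟨Real.sqrt (c/2), Real.sqrt_pos.2 (by linarith), ?_⟩
    intro s hs
    have h1 : ((omg p q z s).re)^2 = (‖ww s‖ + (ww s).re)/2 := by
      rw [homg s]; exact sqrtc_re_sq _
    have h2 : 0 ≤ (omg p q z s).re := by rw [homg s]; exact sqrtc_re_nonneg _
    have h3 : c/2 ≤ ((omg p q z s).re)^2 := by
      rw [h1]; linarith [hc s hs]
    calc Real.sqrt (c/2) ≤ Real.sqrt (((omg p q z s).re)^2) := Real.sqrt_le_sqrt h3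
      _ = (omg p q z s).re := Real.sqrt_sq h2
  -- integrability of ω on [0, b]
  have hω1 : IntegrableOn (omg p q z) (Ioc 0 x₀) := by
    rw [integrableOn_Ioc_iff_integrableOn_Ioo]
    have hqm : AEMeasurable q (volume.restrict (Ioo 0 x₀)) :=
      q_int.aestronglyMeasurable.aemeasurable
    have hpm : AEMeasurable p (volume.restrict (Ioo 0 x₀)) :=
      (hpcont.mono (fun y hy => le_of_lt hy.1)).aemeasurable measurableSet_Ioo
    have hbasem : AEMeasurable ww (volume.restrict (Ioo 0 x₀)) := by
      rw [hww]
      exact ((Complex.measurable_ofReal.comp_aemeasurable hqm).sub aemeasurable_const).div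
        (Complex.measurable_ofReal.comp_aemeasurable hpm)
    have hmeas : AEStronglyMeasurable (omg p q z) (volume.restrict (Ioo 0 x₀)) :=
      (sqrtc_measurable.comp_aemeasurable hbasem).aestronglyMeasurable
    have hconst : IntegrableOn (fun _ : ℝ => 1 + ‖z‖/m) (Ioo 0 x₀) :=
      integrableOn_const measure_Ioo_lt_top.ne
    have hg : IntegrableOn (fun t => (1 + ‖z‖/m) + |q t|/m) (Ioo 0 x₀) :=
      hconst.add (q_int.abs.div_const m)
    refine Integrable.mono' hg hmeas ?_
    filter_upwards [ae_restrict_mem measurableSet_Ioo] with t ht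
    have ht0 : (0:ℝ) ≤ t := ht.1.le
    calc ‖omg p q z t‖ = Real.sqrt ‖ww t‖ := by
          rw [homg t, sqrtc_abs]
      _ ≤ Real.sqrt ((|q t| + ‖z‖)/m) := Real.sqrt_le_sqrt (habs_le t ht0)
      _ ≤ 1 + (|q t| + ‖z‖)/m := sqrt_le_one_add _ (by positivity)
      _ = (1 + ‖z‖/m) + |q t|/m := by ring
  have hω2 : ∀ b, x₀ ≤ b → IntegrableOn (omg p q z) (Ioc x₀ b) := by
    intro b hb
    have hqb : ContinuousOn q (Icc x₀ b) := hqcont.mono (fun y hy => hy.1)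
    obtain ⟨Q, hQ⟩ := isCompact_Icc.exists_bound_of_continuousOn hqb
    have hwwcont : ContinuousOn ww (Icc x₀ b) := by
      rw [hww]
      apply ContinuousOn.div
      · exact (Complex.continuous_ofReal.comp_continuousOn hqb).sub continuousOn_const
      · exact Complex.continuous_ofReal.comp_continuousOn
          (hpcont.mono (fun y hy => le_trans hx₀ hy.1))
      · intro y hy
        exact Complex.ofReal_ne_zero.2 (p_pos y (le_trans hx₀ hy.1)).ne'
    have hmeas : AEStronglyMeasurable (omg p q z) (volume.restrict (Ioc x₀ b)) := by
      have hbasem : AEMeasurable ww (volume.restrict (Ioc x₀ b)) :=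
        (hwwcont.mono Ioc_subset_Icc_self).aemeasurable measurableSet_Ioc
      exact (sqrtc_measurable.comp_aemeasurable hbasem).aestronglyMeasurable
    have hconst : IntegrableOn (fun _ : ℝ => Real.sqrt ((|Q| + ‖z‖)/m)) (Ioc x₀ b) :=
      integrableOn_const measure_Ioc_lt_top.ne
    refine Integrable.mono' hconst hmeas ?_
    filter_upwards [ae_restrict_mem measurableSet_Ioc] with t ht
    have ht0 : (0:ℝ) ≤ t := le_trans hx₀ ht.1.le
    have hQt : |q t| ≤ |Q| := by
      have := hQ t ⟨ht.1.le, ht.2⟩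
      rw [Real.norm_eq_abs] at this
      exact le_trans this (le_abs_self Q)
    calc ‖omg p q z t‖ = Real.sqrt ‖ww t‖ := by
          rw [homg t, sqrtc_abs]
      _ ≤ Real.sqrt ((|Q| + ‖z‖)/m) := by
          apply Real.sqrt_le_sqrt
          calc ‖ww t‖ ≤ (|q t| + ‖z‖)/m := habs_le t ht0
            _ ≤ (|Q| + ‖z‖)/m := by gcongr
  have hωint : ∀ b, 0 ≤ b → IntervalIntegrable (omg p q z) volume 0 b := by
    intro b hb
    rw [intervalIntegrable_iff_integrableOn_Ioc_of_le hb]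
    rcases le_total b x₀ with h | h
    · exact hω1.mono_set (Ioc_subset_Ioc_right h)
    · have hU : Ioc (0:ℝ) b = Ioc 0 x₀ ∪ Ioc x₀ b := (Ioc_union_Ioc_eq_Ioc hx₀ h).symm
      rw [hU]
      exact hω1.union (hω2 b h)
  -- continuity of Ω and of the integrand
  have hΩcont : ContinuousOn (Omg p q z) (Ici (0:ℝ)) := by
    intro x hx
    have h := intervalIntegral.continuousOn_primitive_interval'
      (hωint (x+1) (by linarith [show (0:ℝ) ≤ x from hx])) (left_mem_uIcc)
    rw [uIcc_of_le (by linarith [show (0:ℝ) ≤ x from hx] : (0:ℝ) ≤ x+1)] at h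
    exact contWithinAt_Ici_of_Icc hx (h x ⟨hx, by linarith [show (0:ℝ) ≤ x from hx]⟩)
  have hacont : ContinuousOn (aa p q z) (Ici (0:ℝ)) :=
    Complex.continuous_exp.comp_continuousOn hΩcont.neg
  have hfcont : ContinuousOn (fun s => ((p s : ℂ))⁻¹ * (aa p q z s ^ 2)⁻¹) (Ici (0:ℝ)) := by
    apply ContinuousOn.mul
    · exact (Complex.continuous_ofReal.comp_continuousOn hpcont).inv₀
        (fun s hs => Complex.ofReal_ne_zero.2 (p_pos s hs).ne')
    · exact (hacont.pow 2).inv₀ (fun s hs => pow_ne_zero 2 (Complex.exp_ne_zero _))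
  -- norm formulas
  have hnorm_aa : ∀ t, ‖aa p q z t‖ = Real.exp (-(Omg p q z t).re) := by
    intro t
    rw [show aa p q z t = Complex.exp (-(Omg p q z t)) from rfl, 
      Complex.norm_exp, Complex.neg_re]
  have hexp_sq : ∀ A B : ℝ, Real.exp A ^ 2 * (Real.exp B ^ 2)⁻¹ = Real.exp (2*A - 2*B) := by
    intro A B
    rw [sq, sq, ← Real.exp_add, ← Real.exp_add, ← Real.exp_neg, ← Real.exp_add]
    ring_nf
  -- conclusion
  refine ⟨m⁻¹ * (1/(2*δ)), ?_⟩
  intro x y hx hxy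
  have hx0 : (0:ℝ) ≤ x := le_trans hx₁0 hx
  have hy0 : (0:ℝ) ≤ y := le_trans hx0 hxy
  have hFint : IntervalIntegrable (fun s => ((p s : ℂ))⁻¹ * (aa p q z s ^ 2)⁻¹) volume x y := by
    apply ContinuousOn.intervalIntegrable
    apply hfcont.mono
    rw [uIcc_of_le hxy]
    exact fun t ht => le_trans hx0 ht.1
  have hpoint : ∀ s ∈ Icc x y,
      ‖aa p q z y‖^2 * ‖((p s : ℂ))⁻¹ * (aa p q z s ^ 2)⁻¹‖ ≤ m⁻¹ * Real.exp (2*δ*s - 2*δ*y) := by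
    intro s hs
    have hs0 : (0:ℝ) ≤ s := le_trans hx0 hs.1
    have hsx₁ : x₁ ≤ s := le_trans hx hs.1
    have hint_sy : IntervalIntegrable (omg p q z) volume s y :=
      ((hωint s hs0).symm.trans (hωint y hy0))
    have hsub : Omg p q z y - Omg p q z s = ∫ t in s..y, omg p q z t :=
      intervalIntegral.integral_interval_sub_left (hωint y hy0) (hωint s hs0)
    have hre_int : IntervalIntegrable (fun t => (omg p q z t).re) volume s y := by
      refine ⟨?_, ?_⟩
      · exact hint_sy.1.re
      · exact hint_sy.2.re
    have hre_eq : (Omg p q z y - Omg p q z s).re = ∫ t in s..y, (omg p q z t).re := by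
      rw [hsub]
      have h := Complex.reCLM.intervalIntegral_comp_comm hint_sy
      simpa using h.symm
    have hre_ge : δ * (y - s) ≤ (Omg p q z y).re - (Omg p q z s).re := by
      have h1 : (Omg p q z y - Omg p q z s).re
          = (Omg p q z y).re - (Omg p q z s).re := Complex.sub_re _ _
      rw [← h1, hre_eq]
      have h2 : ∫ _ in s..y, δ ≤ ∫ t in s..y, (omg p q z t).re :=
        intervalIntegral.integral_mono_on hs.2 intervalIntegrable_const hre_int
          (fun t ht => hδ t (le_trans hsx₁ ht.1))
      simpa [intervalIntegral.integral_const, smul_eq_mul, mul_comm] using h2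
    have hnF : ‖((p s : ℂ))⁻¹ * (aa p q z s ^ 2)⁻¹‖
        = (p s)⁻¹ * (Real.exp (-(Omg p q z s).re) ^ 2)⁻¹ := by
      simp only [norm_mul, norm_inv, norm_pow]
      rw [hnorm_aa s, Complex.norm_real, Real.norm_eq_abs, abs_of_pos (p_pos s hs0)]
    have heq : ‖aa p q z y‖^2 * ‖((p s : ℂ))⁻¹ * (aa p q z s ^ 2)⁻¹‖
        = (p s)⁻¹ * Real.exp (2*(Omg p q z s).re - 2*(Omg p q z y).re) := by
      rw [hnF, hnorm_aa y]
      rw [show Real.exp (-(Omg p q z y).re) ^ 2 * ((p s)⁻¹ * (Real.exp (-(Omg p q z s).re) ^ 2)⁻¹)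
        = (p s)⁻¹ * (Real.exp (-(Omg p q z y).re) ^ 2 * (Real.exp (-(Omg p q z s).re) ^ 2)⁻¹) from by ring]
      rw [hexp_sq]
      ring_nf
    rw [heq]
    have h3 : (p s)⁻¹ ≤ m⁻¹ := inv_anti₀ hm0 (hm s hs0)
    have h4 : Real.exp (2*(Omg p q z s).re - 2*(Omg p q z y).re)
        ≤ Real.exp (2*δ*s - 2*δ*y) := by
      apply Real.exp_le_exp.2
      nlinarith [hre_ge]
    exact mul_le_mul h3 h4 (Real.exp_pos _).le (by positivity)
  -- the explicit exponential integral
  have hcexp : Continuous fun s : ℝ => Real.exp (2*δ*s - 2*δ*y) :=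
    Real.continuous_exp.comp ((continuous_const.mul continuous_id).sub continuous_const)
  have hFTC : ∫ s in x..y, Real.exp (2*δ*s - 2*δ*y)
      = Real.exp (2*δ*y - 2*δ*y)/(2*δ) - Real.exp (2*δ*x - 2*δ*y)/(2*δ) := by
    refine intervalIntegral.integral_eq_sub_of_hasDerivAt
      (f := fun s => Real.exp (2*δ*s - 2*δ*y)/(2*δ))
      (f' := fun s => Real.exp (2*δ*s - 2*δ*y)) ?_ ?_
    · intro t _
      have h1 : HasDerivAt (fun s : ℝ => 2*δ*s - 2*δ*y) (2*δ) t := by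
        simpa using ((hasDerivAt_id t).const_mul (2*δ)).sub_const (2*δ*y)
      have h2 := (h1.exp).div_const (2*δ)
      exact h2.congr_deriv (mul_div_cancel_right₀ _ (by positivity))
    · exact hcexp.intervalIntegrable x y
  have hexp_le : ∫ s in x..y, Real.exp (2*δ*s - 2*δ*y) ≤ 1/(2*δ) := by
    rw [hFTC, show 2*δ*y - 2*δ*y = 0 from by ring, Real.exp_zero]
    have h5 : 0 ≤ Real.exp (2*δ*x - 2*δ*y)/(2*δ) := by positivity
    linarith
  calc ‖Gker p q z x y‖
      = ‖aa p q z y ^ 2‖ * ‖∫ s in x..y, ((p s : ℂ))⁻¹ * (aa p q z s ^ 2)⁻¹‖ := by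
        rw [Fker_def, norm_mul]
    _ ≤ ‖aa p q z y ^ 2‖ * ∫ s in x..y, ‖((p s : ℂ))⁻¹ * (aa p q z s ^ 2)⁻¹‖ :=
        mul_le_mul_of_nonneg_left (intervalIntegral.norm_integral_le_integral_norm hxy)
          (norm_nonneg _)
    _ = ∫ s in x..y, ‖aa p q z y‖^2 * ‖((p s : ℂ))⁻¹ * (aa p q z s ^ 2)⁻¹‖ := by
        rw [norm_pow, ← intervalIntegral.integral_const_mul]
    _ ≤ ∫ s in x..y, m⁻¹ * Real.exp (2*δ*s - 2*δ*y) := by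
        refine intervalIntegral.integral_mono_on hxy (hFint.norm.const_mul _) ?_ hpoint
        exact (hcexp.intervalIntegrable x y).const_mul _
    _ = m⁻¹ * ∫ s in x..y, Real.exp (2*δ*s - 2*δ*y) := intervalIntegral.integral_const_mul _ _
    _ ≤ m⁻¹ * (1/(2*δ)) := mul_le_mul_of_nonneg_left hexp_le (by positivity)


end
end

section
/- Let λ > 0 and let θ be a solution of the Schrödinger equation with spectral parameter λ on [0,∞) satisfying θ(x)·exp(−iΦ(x,λ)) → K(λ) and θ'(x)·exp(−iΦ(x,λ)) → i√(λ/p₀)·K(λ) as x → ∞. Then for every x ≥ 0 one has p(x)·(θ'(x)·conj(θ(x)) − θ(x)·conj(θ'(x))) = 2i√(p₀λ)·K(λ)². -/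
open MeasureTheory Filter Set Complex ComplexConjugate

noncomputable section

/-- conj commutes with interval integrals. -/
lemma intervalIntegral_conj' {f : ℝ → ℂ} {a b : ℝ} :
    (∫ t in a..b, conj (f t)) = conj (∫ t in a..b, f t) := by
  simp only [intervalIntegral]
  rw [integral_conj, integral_conj, map_sub]

/-- primitive of a locally integrable function is continuous on `Ici c`. -/
lemma continuousOn_primitive_Ici {E : Type*} [NormedAddCommGroup E] [NormedSpace ℝ E]
    {c : ℝ} {h : ℝ → E} (hloc : ∀ T, IntegrableOn h (Ioc c T)) :
    ContinuousOn (fun t => ∫ s in c..t, h s) (Ici c) := by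
  intro t ht
  have hT : t < t + 1 := lt_add_one t
  have hint : Integrable ((Ioc c (t + 1)).indicator h) :=
    (hloc (t + 1)).integrable_indicator measurableSet_Ioc
  have hK : Continuous fun u => ∫ s in c..u, (Ioc c (t + 1)).indicator h s :=
    hint.continuous_primitive c
  have heq : ∀ u, c ≤ u → u ≤ t + 1 →
      (∫ s in c..u, h s) = ∫ s in c..u, (Ioc c (t + 1)).indicator h s := by
    intro u hcu huT
    rw [intervalIntegral.integral_of_le hcu, intervalIntegral.integral_of_le hcu]
    refine (setIntegral_congr_fun measurableSet_Ioc fun s hs => ?_).symm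
    exact indicator_of_mem (Ioc_subset_Ioc_right huT hs) h
  refine (hK.continuousAt.continuousWithinAt).congr_of_eventuallyEq ?_ (heq t ht hT.le)
  filter_upwards [self_mem_nhdsWithin, mem_nhdsWithin_of_mem_nhds (Iic_mem_nhds hT)]
    with u hu1 hu2
  exact heq u hu1 hu2

/-- Integrable times continuous-on-compact is interval integrable. -/
lemma intervalIntegrable_mul_cont {x y : ℝ} (hxy : x ≤ y) {h ψ : ℝ → ℂ}
    (hh : IntegrableOn h (Ioc x y)) (hψ : ContinuousOn ψ (Icc x y)) :
    IntervalIntegrable (fun s => h s * ψ s) volume x y := by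
  rw [intervalIntegrable_iff_integrableOn_Ioc_of_le hxy]
  obtain ⟨C, hC⟩ := isCompact_Icc.exists_bound_of_continuousOn hψ
  refine Integrable.mono' (hh.norm.mul_const C)
    (hh.aestronglyMeasurable.mul
      ((hψ.mono Ioc_subset_Icc_self).aestronglyMeasurable measurableSet_Ioc)) ?_
  refine (ae_restrict_iff' measurableSet_Ioc).2 (ae_of_all _ fun s hs => ?_)
  rw [norm_mul]
  exact mul_le_mul_of_nonneg_left (hC s (Ioc_subset_Icc_self hs)) (norm_nonneg _)

lemma integrableOn_conj' {s : Set ℝ} {h : ℝ → ℂ} (hh : IntegrableOn h s) :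
    IntegrableOn (fun t => conj (h t)) s := by
  refine Integrable.mono' hh.norm ?_ (ae_of_all _ fun t => ?_)
  · exact continuous_star.comp_aestronglyMeasurable hh.aestronglyMeasurable
  · simp

/-- Fubini on the triangle. -/
lemma fubini_triangle {x y : ℝ} (hxy : x ≤ y) (h φ : ℝ → ℂ)
    (hh : IntegrableOn h (Ioc x y)) (hφ : ContinuousOn φ (Icc x y)) :
    ∫ s in x..y, h s * (∫ u in s..y, φ u) = ∫ u in x..y, φ u * (∫ s in x..u, h s) := by
  have hφi : IntegrableOn φ (Ioc x y) :=
    (hφ.integrableOn_compact isCompact_Icc).mono_set Ioc_subset_Icc_self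
  set μ := volume.restrict (Ioc x y) with hμdef
  have mS : MeasurableSet {z : ℝ × ℝ | z.1 < z.2} :=
    measurableSet_lt measurable_fst measurable_snd
  have hG : Integrable (fun z : ℝ × ℝ => h z.1 * φ z.2) (μ.prod μ) := hh.mul_prod hφi
  have hF : Integrable
      (fun z : ℝ × ℝ => ({z : ℝ × ℝ | z.1 < z.2}).indicator (fun z => h z.1 * φ z.2) z)
      (μ.prod μ) := hG.indicator mS
  have swap :
      (∫ s, ∫ u, ({z : ℝ × ℝ | z.1 < z.2}).indicator (fun z => h z.1 * φ z.2) (s, u) ∂μ ∂μ)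
        = ∫ u, ∫ s, ({z : ℝ × ℝ | z.1 < z.2}).indicator (fun z => h z.1 * φ z.2) (s, u) ∂μ ∂μ :=
    integral_integral_swap hF
  have lhs_eq : (∫ s in x..y, h s * (∫ u in s..y, φ u))
      = ∫ s, ∫ u, ({z : ℝ × ℝ | z.1 < z.2}).indicator (fun z => h z.1 * φ z.2) (s, u) ∂μ ∂μ := by
    rw [intervalIntegral.integral_of_le hxy]
    refine setIntegral_congr_fun measurableSet_Ioc fun s hs => ?_
    have inner1 : (fun u => ({z : ℝ × ℝ | z.1 < z.2}).indicator (fun z => h z.1 * φ z.2) (s, u))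
        = (Ioi s).indicator (fun u => h s * φ u) := by
      funext u
      by_cases hsu : s < u <;> simp [Set.indicator, hsu]
    rw [inner1, setIntegral_indicator measurableSet_Ioi]
    have hset : Ioc x y ∩ Ioi s = Ioc s y := by
      ext u
      simp only [mem_inter_iff, mem_Ioc, mem_Ioi]
      exact ⟨fun hu => ⟨hu.2, hu.1.2⟩, fun hu => ⟨⟨hs.1.trans hu.1, hu.2⟩, hu.1⟩⟩
    rw [hset, MeasureTheory.integral_const_mul, intervalIntegral.integral_of_le hs.2]
  have rhs_eq : (∫ u in x..y, φ u * (∫ s in x..u, h s))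
      = ∫ u, ∫ s, ({z : ℝ × ℝ | z.1 < z.2}).indicator (fun z => h z.1 * φ z.2) (s, u) ∂μ ∂μ := by
    rw [intervalIntegral.integral_of_le hxy]
    refine setIntegral_congr_fun measurableSet_Ioc fun u hu => ?_
    have inner1 : (fun s => ({z : ℝ × ℝ | z.1 < z.2}).indicator (fun z => h z.1 * φ z.2) (s, u))
        = (Iio u).indicator (fun s => h s * φ u) := by
      funext s
      by_cases hsu : s < u <;> simp [Set.indicator, hsu]
    rw [inner1, setIntegral_indicator measurableSet_Iio]
    have hset : Ioc x y ∩ Iio u = Ioo x u := by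
      ext s
      simp only [mem_inter_iff, mem_Ioc, mem_Iio, mem_Ioo]
      exact ⟨fun hs => ⟨hs.1.1, hs.2⟩, fun hs => ⟨⟨hs.1, (hs.2.le.trans hu.2)⟩, hs.2⟩⟩
    rw [hset, MeasureTheory.integral_mul_const, intervalIntegral.integral_of_le hu.1.le,
      integral_Ioc_eq_integral_Ioo, mul_comm]
  rw [lhs_eq, rhs_eq, swap]



/-- a solution `θ` with the asymptotics `θ(x) e^{−iΦ} → K(λ)`,
`θ'(x) e^{−iΦ} → i√(λ/p₀)K(λ)` satisfies
`p(x)(θ'(x) conj θ(x) − θ(x) conj θ'(x)) = 2i√(p₀λ) K(λ)²` for every `x ≥ 0`. -/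
theorem statement12 (p p' q q' : ℝ → ℝ) (p₀ x₀ : ℝ)
    (hPQ : PQData p p' q q' p₀ x₀)
    (lam : ℝ) (hlam : 0 < lam)
    (θ θ' : ℝ → ℂ)
    (hsol : IsSol p q (lam : ℂ) (Ici 0) θ θ')
    (hl : Tendsto (fun x => θ x * Complex.exp (-(Complex.I * (Phi p q lam x : ℂ))))
      atTop (nhds ((Kc p q lam : ℂ))))
    (hl' : Tendsto (fun x => θ' x * Complex.exp (-(Complex.I * (Phi p q lam x : ℂ))))
      atTop (nhds (Complex.I * (Real.sqrt (lam / p₀) : ℂ) * (Kc p q lam : ℂ)))) :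
    ∀ x : ℝ, 0 ≤ x →
      (p x : ℂ) * (θ' x * (starRingEnd ℂ) (θ x) - θ x * (starRingEnd ℂ) (θ' x))
        = 2 * Complex.I * (Real.sqrt (p₀ * lam) : ℂ) * (Kc p q lam : ℂ) ^ 2 := by
  set h : ℝ → ℂ := fun t => ((q t : ℂ) - (lam : ℂ)) * θ t with hhdef
  set g : ℝ → ℂ := fun t => (p t : ℂ) * θ' t with hgdef
  -- basic continuity facts
  have θcont : ContinuousOn θ (Ici 0) := fun t ht => (hsol.1 t ht).continuousWithinAt
  have pcont : ContinuousOn p (Ici 0) := by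
    have prim := continuousOn_primitive_Ici (c := 0) (h := p')
      (fun T => hPQ.p'_int.mono_set Ioc_subset_Ioi_self)
    exact (continuousOn_const.add prim).congr fun t ht => hPQ.p_ac t ht
  have pC : ContinuousOn (fun t => (p t : ℂ)) (Ici 0) :=
    Complex.continuous_ofReal.comp_continuousOn pcont
  have pne : ∀ t : ℝ, 0 ≤ t → (p t : ℂ) ≠ 0 := fun t ht => by
    exact_mod_cast (hPQ.p_pos t ht).ne'
  have qcont : ContinuousOn q (Ici x₀) := by
    have prim := continuousOn_primitive_Ici (c := x₀) (h := q')
      (fun T => hPQ.q'_int.mono_set Ioc_subset_Ioi_self)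
    exact (continuousOn_const.add prim).congr fun t ht => hPQ.q_ac t ht
  -- local integrability of h on [0, T]
  have hIa : ∀ T, IntegrableOn h (Ioc 0 T) := by
    intro T
    have hq1 : IntegrableOn (fun t => (q t : ℂ) * θ t) (Ioo 0 x₀) := by
      obtain ⟨C, hC⟩ := isCompact_Icc.exists_bound_of_continuousOn
        (θcont.mono (Icc_subset_Ici_self (a := x₀) (b := (0:ℝ))))
      refine Integrable.mono' (hPQ.q_int.norm.mul_const C)
        ((Complex.continuous_ofReal.comp_aestronglyMeasurable
            hPQ.q_int.aestronglyMeasurable).mul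
          ((θcont.mono (Ioo_subset_Icc_self.trans Icc_subset_Ici_self)).aestronglyMeasurable
            measurableSet_Ioo)) ?_
      refine (ae_restrict_iff' measurableSet_Ioo).2 (ae_of_all _ fun t ht => ?_)
      rw [norm_mul, Complex.norm_real]
      exact mul_le_mul_of_nonneg_left (hC t (Ioo_subset_Icc_self ht)) (norm_nonneg _)
    have hq2 : IntegrableOn (fun t => (q t : ℂ) * θ t) (Icc x₀ T) := by
      refine ContinuousOn.integrableOn_Icc ?_
      exact (Complex.continuous_ofReal.comp_continuousOn
          (qcont.mono Icc_subset_Ici_self)).mul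
        (θcont.mono fun t ht => hPQ.hx₀.trans ht.1)
    have hq : IntegrableOn (fun t => (q t : ℂ) * θ t) (Ioc 0 T) := by
      refine (hq1.union hq2).mono_set fun t ht => ?_
      rcases lt_or_ge t x₀ with hlt | hle
      · exact Or.inl ⟨ht.1, hlt⟩
      · exact Or.inr ⟨hle, ht.2⟩
    have hθT : IntegrableOn (fun t => (lam : ℂ) * θ t) (Ioc 0 T) := by
      refine (ContinuousOn.integrableOn_Icc ?_).mono_set Ioc_subset_Icc_self
      exact continuousOn_const.mul (θcont.mono fun t ht => ht.1)
    have : h = fun t => (q t : ℂ) * θ t - (lam : ℂ) * θ t := by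
      funext t; simp only [hhdef]; ring
    rw [this]
    exact hq.sub hθT
  -- g representation and continuity
  have hgrep : ∀ a, 0 ≤ a → ∀ b, 0 ≤ b → g b - g a = ∫ t in a..b, h t :=
    fun a ha b hb => hsol.2 a ha b hb
  have gcont : ContinuousOn g (Ici 0) := by
    have prim := continuousOn_primitive_Ici (c := 0) hIa
    refine ((continuousOn_const (c := g 0)).add prim).congr fun t ht => ?_
    exact (sub_eq_iff_eq_add'.mp (hgrep 0 le_rfl t ht))
  have θ'cont : ContinuousOn θ' (Ici 0) := by
    refine (gcont.div pC fun t ht => pne t ht).congr fun t ht => ?_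
    show θ' t = g t / (p t : ℂ); rw [eq_div_iff (pne t ht)]
    show θ' t * (p t : ℂ) = (p t : ℂ) * θ' t
    ring
  -- FTC for θ
  have ftcθ : ∀ a, 0 ≤ a → ∀ b, a ≤ b → (∫ t in a..b, θ' t) = θ b - θ a := by
    intro a ha b hab
    refine intervalIntegral.integral_eq_sub_of_hasDeriv_right_of_le hab
      (θcont.mono fun t ht => ha.trans ht.1)
      (fun t ht => (hsol.1 t (ha.trans ht.1.le)).mono fun u hu => (ha.trans ht.1.le).trans hu.le)
      ?_
    rw [intervalIntegrable_iff_integrableOn_Ioc_of_le hab]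
    exact ((θ'cont.mono fun t ht => ha.trans ht.1).integrableOn_Icc).mono_set
      Ioc_subset_Icc_self
  -- constancy of the Wronskian
  have const : ∀ x, 0 ≤ x → ∀ y, x ≤ y →
      (p y : ℂ) * (θ' y * conj (θ y) - θ y * conj (θ' y))
        = (p x : ℂ) * (θ' x * conj (θ x) - θ x * conj (θ' x)) := by
    intro x hx y hxy
    have hy : 0 ≤ y := hx.trans hxy
    have subIcc : Icc x y ⊆ Ici 0 := fun t ht => hx.trans ht.1
    have hhxy : IntegrableOn h (Ioc x y) := (hIa y).mono_set (Ioc_subset_Ioc_left hx)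
    have hhc : IntegrableOn (fun s => conj (h s)) (Ioc x y) := integrableOn_conj' hhxy
    set φ : ℝ → ℂ := fun u => conj (θ' u) with hφdef
    have θ'contxy : ContinuousOn θ' (Icc x y) := θ'cont.mono subIcc
    have φcont : ContinuousOn φ (Icc x y) :=
      continuous_star.comp_continuousOn θ'contxy
    have θcontxy : ContinuousOn θ (Icc x y) := θcont.mono subIcc
    have cθcont : ContinuousOn (fun s => conj (θ s)) (Icc x y) :=
      continuous_star.comp_continuousOn θcontxy
    set H : ℝ → ℂ := fun t => ∫ s in x..t, h s with hHdef
    have Hcont : ContinuousOn H (Icc x y) :=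
      (continuousOn_primitive_Ici (c := x)
        (fun T => (hIa T).mono_set (Ioc_subset_Ioc_left hx))).mono
        (fun t ht => ht.1)
    have cHcont : ContinuousOn (fun t => conj (H t)) (Icc x y) :=
      continuous_star.comp_continuousOn Hcont
    have hcH : ∀ t, conj (H t) = ∫ s in x..t, conj (h s) := fun t =>
      (intervalIntegral_conj').symm
    -- pointwise FTC identities
    have hθy : ∀ s ∈ Icc x y, θ y = θ s + ∫ u in s..y, θ' u := by
      intro s hs
      rw [ftcθ s (hx.trans hs.1) y hs.2]; ring
    have hcθy : ∀ s ∈ Icc x y, conj (θ y) = conj (θ s) + ∫ u in s..y, φ u := by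
      intro s hs
      have := congrArg conj (hθy s hs)
      rwa [map_add, ← intervalIntegral_conj'] at this
    -- continuity of tail primitives
    have tailφ : ContinuousOn (fun s => ∫ u in s..y, φ u) (Icc x y) := by
      have : IntegrableOn φ (uIcc x y) := by
        rw [uIcc_of_le hxy]; exact φcont.integrableOn_Icc
      simpa [uIcc_of_le hxy] using intervalIntegral.continuousOn_primitive_interval_left this
    have tailθ' : ContinuousOn (fun s => ∫ u in s..y, θ' u) (Icc x y) := by
      have : IntegrableOn θ' (uIcc x y) := by
        rw [uIcc_of_le hxy]; exact θ'contxy.integrableOn_Icc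
      simpa [uIcc_of_le hxy] using intervalIntegral.continuousOn_primitive_interval_left this
    -- F1
    have F1 : H y * conj (θ y)
        = (∫ s in x..y, h s * conj (θ s)) + ∫ u in x..y, φ u * H u := by
      have step1 : H y * conj (θ y) = ∫ s in x..y, h s * conj (θ y) := by
        rw [intervalIntegral.integral_mul_const]
      have step2 : (∫ s in x..y, h s * conj (θ y))
          = ∫ s in x..y, (h s * conj (θ s) + h s * ∫ u in s..y, φ u) := by
        refine intervalIntegral.integral_congr fun s hs => ?_
        rw [uIcc_of_le hxy] at hs
        rw [hcθy s hs]; ring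
      rw [step1, step2, intervalIntegral.integral_add
        (intervalIntegrable_mul_cont hxy hhxy cθcont)
        (intervalIntegrable_mul_cont hxy hhxy tailφ),
        fubini_triangle hxy h φ hhxy φcont]
    -- F2
    have F2 : conj (H y) * θ y
        = (∫ s in x..y, conj (h s) * θ s) + ∫ u in x..y, θ' u * conj (H u) := by
      have step1 : conj (H y) * θ y = ∫ s in x..y, conj (h s) * θ y := by
        rw [intervalIntegral.integral_mul_const, hcH y]
      have step2 : (∫ s in x..y, conj (h s) * θ y)
          = ∫ s in x..y, (conj (h s) * θ s + conj (h s) * ∫ u in s..y, θ' u) := by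
        refine intervalIntegral.integral_congr fun s hs => ?_
        rw [uIcc_of_le hxy] at hs
        rw [hθy s hs]; ring
      have step3 : (∫ u in x..y, θ' u * ∫ s in x..u, conj (h s))
          = ∫ u in x..y, θ' u * conj (H u) := by
        refine intervalIntegral.integral_congr fun u _ => ?_
        rw [hcH u]
      rw [step1, step2, intervalIntegral.integral_add
        (intervalIntegrable_mul_cont hxy hhc θcontxy)
        (intervalIntegrable_mul_cont hxy hhc tailθ'),
        fubini_triangle hxy (fun s => conj (h s)) θ' hhc θ'contxy, step3]
    -- F3
    have F3 : (∫ s in x..y, h s * conj (θ s)) = ∫ s in x..y, conj (h s) * θ s := by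
      have : (fun s => h s * conj (θ s)) = fun s => conj (h s) * θ s := by
        funext s
        simp only [hhdef, map_mul, map_sub, Complex.conj_ofReal]
        ring
      rw [this]
    -- F4
    have F4 : g x * (∫ u in x..y, φ u) + (∫ u in x..y, φ u * H u)
        = conj (g x) * (∫ u in x..y, θ' u) + ∫ u in x..y, θ' u * conj (H u) := by
      have l1 : g x * (∫ u in x..y, φ u) + (∫ u in x..y, φ u * H u)
          = ∫ u in x..y, (g x * φ u + φ u * H u) := by
        rw [intervalIntegral.integral_add]
        · rw [intervalIntegral.integral_const_mul]
        · exact (continuousOn_const.mul φcont).intervalIntegrable_of_Icc hxy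
        · exact (φcont.mul Hcont).intervalIntegrable_of_Icc hxy
      have l2 : conj (g x) * (∫ u in x..y, θ' u) + (∫ u in x..y, θ' u * conj (H u))
          = ∫ u in x..y, (conj (g x) * θ' u + θ' u * conj (H u)) := by
        rw [intervalIntegral.integral_add]
        · rw [intervalIntegral.integral_const_mul]
        · exact (continuousOn_const.mul θ'contxy).intervalIntegrable_of_Icc hxy
        · exact (θ'contxy.mul cHcont).intervalIntegrable_of_Icc hxy
      rw [l1, l2]
      refine intervalIntegral.integral_congr fun u hu => ?_
      rw [uIcc_of_le hxy] at hu
      have hu0 : (0:ℝ) ≤ u := hx.trans hu.1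
      have hgu : g u = g x + H u := sub_eq_iff_eq_add'.mp (hgrep x hx u hu0)
      have hcgu : conj (g u) = conj (g x) + conj (H u) := by rw [hgu, map_add]
      have key : φ u * g u = θ' u * conj (g u) := by
        simp only [hgdef, hφdef, map_mul, Complex.conj_ofReal]
        ring
      calc g x * φ u + φ u * H u = φ u * (g x + H u) := by ring
        _ = φ u * g u := by rw [← hgu]
        _ = θ' u * conj (g u) := key
        _ = θ' u * (conj (g x) + conj (H u)) := by rw [hcgu]
        _ = conj (g x) * θ' u + θ' u * conj (H u) := by ring
    -- assemble
    have gform : ∀ t, (p t : ℂ) * (θ' t * conj (θ t) - θ t * conj (θ' t))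
        = g t * conj (θ t) - θ t * conj (g t) := by
      intro t
      simp only [hgdef, map_mul, Complex.conj_ofReal]
      ring
    have hθyx := hθy x ⟨le_rfl, hxy⟩
    have hcθyx := hcθy x ⟨le_rfl, hxy⟩
    have hgy : g y = g x + H y := sub_eq_iff_eq_add'.mp (hgrep x hx y hy)
    have hcgy : conj (g y) = conj (g x) + conj (H y) := by rw [hgy, map_add]
    have F1' : H y * (conj (θ x) + ∫ u in x..y, φ u)
        = (∫ s in x..y, h s * conj (θ s)) + ∫ u in x..y, φ u * H u := by
      rw [← hcθyx]; exact F1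
    have F2' : conj (H y) * (θ x + ∫ u in x..y, θ' u)
        = (∫ s in x..y, conj (h s) * θ s) + ∫ u in x..y, θ' u * conj (H u) := by
      rw [← hθyx]; exact F2
    rw [gform y, gform x, hcgy, hgy, hcθyx, hθyx]
    linear_combination F1' - F2' + F3 + F4
  -- the limit of the Wronskian at infinity
  intro x hx
  set K : ℂ := ((Kc p q lam : ℝ) : ℂ) with hKdef
  set s : ℂ := ((Real.sqrt (lam / p₀) : ℝ) : ℂ) with hsdef
  have he1 : ∀ t : ℝ, Complex.exp (-(Complex.I * (Phi p q lam t : ℂ)))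
      * conj (Complex.exp (-(Complex.I * (Phi p q lam t : ℂ)))) = 1 := by
    intro t
    have harg : (-(Complex.I * (Phi p q lam t : ℂ)))
        + conj (-(Complex.I * (Phi p q lam t : ℂ))) = 0 := by
      simp only [map_neg, map_mul, Complex.conj_I, Complex.conj_ofReal]
      ring
    rw [← Complex.exp_conj, ← Complex.exp_add, harg, Complex.exp_zero]
  have hcθ : Tendsto
      (fun t => conj (θ t * Complex.exp (-(Complex.I * (Phi p q lam t : ℂ)))))
      atTop (nhds (conj K)) := (Complex.continuous_conj.tendsto _).comp hl
  have hcθ' : Tendsto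
      (fun t => conj (θ' t * Complex.exp (-(Complex.I * (Phi p q lam t : ℂ)))))
      atTop (nhds (conj (Complex.I * s * K))) := (Complex.continuous_conj.tendsto _).comp hl'
  have k1 : Tendsto (fun t => θ' t * conj (θ t)) atTop
      (nhds (Complex.I * s * K * conj K)) := by
    refine (hl'.mul hcθ).congr fun t => ?_
    rw [map_mul]
    calc θ' t * Complex.exp (-(Complex.I * (Phi p q lam t : ℂ)))
          * (conj (θ t) * conj (Complex.exp (-(Complex.I * (Phi p q lam t : ℂ)))))
        = θ' t * conj (θ t) * (Complex.exp (-(Complex.I * (Phi p q lam t : ℂ)))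
          * conj (Complex.exp (-(Complex.I * (Phi p q lam t : ℂ))))) := by ring
      _ = θ' t * conj (θ t) := by rw [he1 t, mul_one]
  have k2 : Tendsto (fun t => θ t * conj (θ' t)) atTop
      (nhds (K * conj (Complex.I * s * K))) := by
    refine (hl.mul hcθ').congr fun t => ?_
    rw [map_mul]
    calc θ t * Complex.exp (-(Complex.I * (Phi p q lam t : ℂ)))
          * (conj (θ' t) * conj (Complex.exp (-(Complex.I * (Phi p q lam t : ℂ)))))
        = θ t * conj (θ' t) * (Complex.exp (-(Complex.I * (Phi p q lam t : ℂ)))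
          * conj (Complex.exp (-(Complex.I * (Phi p q lam t : ℂ))))) := by ring
      _ = θ t * conj (θ' t) := by rw [he1 t, mul_one]
  have hpC : Tendsto (fun t => (p t : ℂ)) atTop (nhds ((p₀ : ℝ) : ℂ)) :=
    (Complex.continuous_ofReal.tendsto _).comp hPQ.p_lim
  have hlim : Tendsto
      (fun t => (p t : ℂ) * (θ' t * conj (θ t) - θ t * conj (θ' t)))
      atTop (nhds (((p₀ : ℝ) : ℂ) * (Complex.I * s * K * conj K - K * conj (Complex.I * s * K)))) :=
    hpC.mul (k1.sub k2)
  have hps : ((p₀ : ℝ) : ℂ) * s = ((Real.sqrt (p₀ * lam) : ℝ) : ℂ) := by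
    rw [hsdef, ← Complex.ofReal_mul]
    congr 1
    have h1 : Real.sqrt (lam / p₀) = Real.sqrt lam / Real.sqrt p₀ := Real.sqrt_div hlam.le p₀
    have h2 : Real.sqrt (p₀ * lam) = Real.sqrt p₀ * Real.sqrt lam := Real.sqrt_mul hPQ.hp₀.le lam
    have h3 : Real.sqrt p₀ ≠ 0 := Real.sqrt_ne_zero'.mpr hPQ.hp₀
    have h4 : Real.sqrt p₀ * Real.sqrt p₀ = p₀ := Real.mul_self_sqrt hPQ.hp₀.le
    rw [h1, h2]
    field_simp
    linear_combination -h4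
  have hval : ((p₀ : ℝ) : ℂ) * (Complex.I * s * K * conj K - K * conj (Complex.I * s * K))
      = 2 * Complex.I * (Real.sqrt (p₀ * lam) : ℂ) * K ^ 2 := by
    rw [← hps]
    simp only [map_mul, Complex.conj_I, hKdef, hsdef, Complex.conj_ofReal]
    ring
  rw [hval] at hlim
  have hconst : Tendsto
      (fun t => (p t : ℂ) * (θ' t * conj (θ t) - θ t * conj (θ' t)))
      atTop (nhds ((p x : ℂ) * (θ' x * conj (θ x) - θ x * conj (θ' x)))) := by
    refine Tendsto.congr' ?_ tendsto_const_nhds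
    filter_upwards [eventually_ge_atTop x] with t ht
    exact (const x hx t ht).symm
  exact tendsto_nhds_unique hconst hlim


end
end

section
/- Let z ∈ ℂ with Im z ≠ 0. Let φ be the solution of the Schrödinger equation with spectral parameter z on [0,∞) with φ(0) = 0 and φ'(0) = 1, and let θ be a solution of the Schrödinger equation with spectral parameter z on [0,∞) that is square integrable on (0,∞) and satisfies w := p(0)·θ(0) ≠ 0 (equivalently, the Wronskian p(x)(φ'(x)θ(x) − φ(x)θ'(x)) equals w for all x). Let g : [0,∞) → ℂ be continuous with compact support, and define f(x) = w⁻¹·(φ(x)·∫ₓ^∞ θ(y)g(y) dy + θ(x)·∫₀ˣ φ(y)g(y) dy). Then f(0) = 0, f and p·f' are locally absolutely continuous on [0,∞), −(p(x)f'(x))' + q(x)f(x) − z·f(x) = g(x) for almost every x > 0, and f is square integrable on (0,∞). -/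
open MeasureTheory Filter Set Complex

noncomputable section

/-- The resolvent applied to `g`:
`f(x) = w⁻¹(φ(x)∫ₓ^∞ θ g + θ(x)∫₀ˣ φ g)`. -/
def resOp (θ φ g : ℝ → ℂ) (w : ℂ) (x : ℝ) : ℂ :=
  w⁻¹ * (φ x * ∫ y in Ioi x, θ y * g y) +
    w⁻¹ * (θ x * ∫ y in (0:ℝ)..x, φ y * g y)

open intervalIntegral

/-- continuity of a primitive on a right half-line -/
lemma contOn_primitive_Ici {E : Type*} [NormedAddCommGroup E] [NormedSpace ℝ E] {h : ℝ → E}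
    {a : ℝ} (hint : ∀ b : ℝ, a ≤ b → IntegrableOn h (Ioc a b)) :
    ContinuousOn (fun x => ∫ t in a..x, h t) (Ici a) := by
  intro x hx
  have hx' : a ≤ x := hx
  have hM : a ≤ x + 1 := by linarith
  have hI : IntervalIntegrable h volume a (x + 1) :=
    (intervalIntegrable_iff_integrableOn_Ioc_of_le hM).2 (hint _ hM)
  have hc : ContinuousOn (fun b => ∫ t in a..b, h t) (Icc a (x + 1)) := by
    have := continuousOn_primitive_interval' hI (by rw [uIcc_of_le hM]; exact ⟨le_rfl, hM⟩)
    rwa [uIcc_of_le hM] at this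
  have h1 := hc x ⟨hx', by linarith⟩
  rw [← Set.Ici_inter_Iic] at h1
  exact (continuousWithinAt_inter (Iic_mem_nhds (by linarith))).1 h1

lemma triangle_fubini {h w : ℝ → ℂ} {x y : ℝ}
    (hh : IntegrableOn h (Ioc x y))
    (hw : IntegrableOn w (Ioc x y)) :
    ∫ t in Ioc x y, (∫ s in Ioc x t, h s) * w t
      = ∫ s in Ioc x y, h s * (∫ t in Icc s y, w t) := by
  set μ := volume.restrict (Ioc x y) with hμ
  set T : Set (ℝ × ℝ) := {p : ℝ × ℝ | p.2 ≤ p.1} with hT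
  set Fn : ℝ × ℝ → ℂ := fun p => w p.1 * h p.2 with hFn
  have hTmeas : MeasurableSet T := measurableSet_le measurable_snd measurable_fst
  have hbase : Integrable Fn (μ.prod μ) := hw.mul_prod hh
  have hint : Integrable (Function.uncurry fun t s => T.indicator Fn (t, s)) (μ.prod μ) :=
    hbase.indicator hTmeas
  have swap := MeasureTheory.integral_integral_swap hint
  calc ∫ t in Ioc x y, (∫ s in Ioc x t, h s) * w t
      = ∫ t, (∫ s, T.indicator Fn (t, s) ∂μ) ∂μ := by
        refine (setIntegral_congr_fun measurableSet_Ioc fun t ht => ?_).symm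
        have : (fun s => T.indicator Fn (t, s)) = Set.indicator (Iic t) (fun s => w t * h s) := by
          funext s
          by_cases hst : s ≤ t <;> simp [Set.indicator, hT, hFn, hst]
        rw [this, MeasureTheory.integral_indicator measurableSet_Iic, hμ,
          Measure.restrict_restrict measurableSet_Iic]
        have : Iic t ∩ Ioc x y = Ioc x t := by
          rw [Set.inter_comm, Set.Ioc_inter_Iic, min_eq_right ht.2]
        rw [this, MeasureTheory.integral_const_mul, mul_comm]
    _ = ∫ s, (∫ t, T.indicator Fn (t, s) ∂μ) ∂μ := swap
    _ = ∫ s in Ioc x y, h s * (∫ t in Icc s y, w t) := by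
        refine setIntegral_congr_fun measurableSet_Ioc fun s hs => ?_
        have : (fun t => T.indicator Fn (t, s)) = Set.indicator (Ici s) (fun t => w t * h s) := by
          funext t
          by_cases hst : s ≤ t <;> simp [Set.indicator, hT, hFn, hst]
        rw [this, MeasureTheory.integral_indicator measurableSet_Ici, hμ,
          Measure.restrict_restrict measurableSet_Ici]
        have : Ici s ∩ Ioc x y = Icc s y := by
          ext t
          simp only [Set.mem_inter_iff, Set.mem_Ici, Set.mem_Ioc, Set.mem_Icc]
          exact ⟨fun h' => ⟨h'.1, h'.2.2⟩, fun h' => ⟨h'.1, hs.1.trans_le h'.1, h'.2⟩⟩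
        rw [this, MeasureTheory.integral_mul_const, mul_comm]

lemma my_ftc2 {v v' : ℝ → ℂ} {x y : ℝ}
    (hv : ∀ t ∈ Icc x y, HasDerivWithinAt v (v' t) (Icc x y) t)
    (hv' : ContinuousOn v' (Icc x y)) :
    ∀ s ∈ Icc x y, ∫ t in s..y, v' t = v y - v s := by
  intro s hs
  have hsy : s ≤ y := hs.2
  refine integral_eq_sub_of_hasDeriv_right_of_le hsy
    (fun t ht => ((hv t ⟨hs.1.trans ht.1, ht.2⟩).continuousWithinAt).mono
      (Icc_subset_Icc hs.1 le_rfl)) ?_ ?_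
  · intro t ht
    have htI : t ∈ Ioo x y := ⟨hs.1.trans_lt ht.1, ht.2⟩
    exact ((hv t (Ioo_subset_Icc_self htI)).hasDerivAt
      (Icc_mem_nhds htI.1 htI.2)).hasDerivWithinAt
  · exact (hv'.mono (Icc_subset_Icc hs.1 le_rfl)).intervalIntegrable_of_Icc hsy

/-- Integration by parts where `u` is an indefinite integral of `h` and `v` is `C¹`. -/
lemma ibp {u v v' h : ℝ → ℂ} {x y : ℝ} (hxy : x ≤ y)
    (hu : ∀ t ∈ Icc x y, u t = u x + ∫ s in x..t, h s)
    (hh : IntegrableOn h (Ioc x y))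
    (hv : ∀ t ∈ Icc x y, HasDerivWithinAt v (v' t) (Icc x y) t)
    (hv' : ContinuousOn v' (Icc x y)) :
    u y * v y - u x * v x = ∫ t in x..y, (h t * v t + u t * v' t) := by
  have hxx : x ∈ Icc x y := ⟨le_rfl, hxy⟩
  have hyy : y ∈ Icc x y := ⟨hxy, le_rfl⟩
  have hhI : IntervalIntegrable h volume x y :=
    (intervalIntegrable_iff_integrableOn_Ioc_of_le hxy).2 hh
  have Hcont : ContinuousOn (fun t => ∫ s in x..t, h s) (Icc x y) := by
    have := continuousOn_primitive_interval' hhI (by rw [uIcc_of_le hxy]; exact hxx)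
    rwa [uIcc_of_le hxy] at this
  have vcont : ContinuousOn v (Icc x y) := fun t ht => (hv t ht).continuousWithinAt
  have ucont : ContinuousOn u (Icc x y) :=
    (continuousOn_const.add Hcont).congr fun t ht => hu t ht
  have ftc := my_ftc2 hv hv'
  have hv'I : IntervalIntegrable v' volume x y := hv'.intervalIntegrable_of_Icc hxy
  have hvI : IntervalIntegrable (fun t => h t * v t) volume x y :=
    hhI.mul_continuousOn (by rwa [uIcc_of_le hxy])
  have huv'I : IntervalIntegrable (fun t => u t * v' t) volume x y :=
    (ucont.mul hv').intervalIntegrable_of_Icc hxy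
  have hHv'I : IntervalIntegrable (fun t => (∫ s in x..t, h s) * v' t) volume x y :=
    (Hcont.mul hv').intervalIntegrable_of_Icc hxy
  have split : ∫ t in x..y, (h t * v t + u t * v' t)
      = (∫ t in x..y, h t * v t) + ∫ t in x..y, u t * v' t :=
    integral_add hvI huv'I
  have split2 : ∫ t in x..y, u t * v' t
      = (∫ t in x..y, u x * v' t) + ∫ t in x..y, (∫ s in x..t, h s) * v' t := by
    rw [← integral_add (hv'I.const_mul (u x)) hHv'I]
    refine integral_congr fun t ht => ?_
    rw [uIcc_of_le hxy] at ht
    rw [hu t ht]; ring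
  have e1 : ∫ t in x..y, u x * v' t = u x * (v y - v x) := by
    rw [intervalIntegral.integral_const_mul, ftc x hxx]
  have e2 : ∫ t in x..y, (∫ s in x..t, h s) * v' t
      = (u y - u x) * v y - ∫ t in x..y, h t * v t := by
    rw [integral_of_le hxy]
    have step : ∫ t in Ioc x y, (∫ s in x..t, h s) * v' t
        = ∫ t in Ioc x y, (∫ s in Ioc x t, h s) * v' t := by
      refine setIntegral_congr_fun measurableSet_Ioc fun t ht => ?_
      rw [integral_of_le ht.1.le]
    rw [step, triangle_fubini hh ((intervalIntegrable_iff_integrableOn_Ioc_of_le hxy).1 hv'I)]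
    have step2 : ∫ s in Ioc x y, h s * (∫ t in Icc s y, v' t)
        = ∫ s in Ioc x y, (h s * v y - h s * v s) := by
      refine setIntegral_congr_fun measurableSet_Ioc fun s hs => ?_
      have hsI : s ∈ Icc x y := ⟨hs.1.le, hs.2⟩
      rw [integral_Icc_eq_integral_Ioc, ← integral_of_le hs.2, ftc s hsI]
      ring
    rw [step2, integral_sub (hh.mul_const (v y))
      ((intervalIntegrable_iff_integrableOn_Ioc_of_le hxy).1 hvI)]
    rw [MeasureTheory.integral_mul_const, hu y hyy]
    simp only [integral_of_le hxy]
    ring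
  rw [split, split2, e1, e2]
  ring

/-- local integrability of `q` on `(0, b]` -/
lemma q_locInt {p p' q q' : ℝ → ℝ} {p₀ x₀ : ℝ} (hPQ : PQData p p' q q' p₀ x₀) (b : ℝ) :
    IntegrableOn q (Ioc 0 b) := by
  have hqcont : ContinuousOn q (Ici x₀) := by
    have hprim : ContinuousOn (fun x => ∫ t in x₀..x, q' t) (Ici x₀) :=
      contOn_primitive_Ici (fun c _ => hPQ.q'_int.mono_set Ioc_subset_Ioi_self)
    exact (continuousOn_const.add hprim).congr fun x hx => hPQ.q_ac x hx
  set M := max x₀ b with hM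
  have hIcc : IntegrableOn q (Icc x₀ M) :=
    (hqcont.mono (Icc_subset_Ici_self)).integrableOn_Icc
  have hsub : Ioc 0 b ⊆ Ioo 0 x₀ ∪ Icc x₀ M := by
    intro t ht
    by_cases h : t < x₀
    · exact Or.inl ⟨ht.1, h⟩
    · exact Or.inr ⟨not_lt.1 h, ht.2.trans (le_max_right _ _)⟩
  exact (hPQ.q_int.union hIcc).mono_set hsub

/-- interval integrability of `t ↦ (q t : ℂ) - z` on intervals in `[0, ∞)` -/
lemma qz_II {p p' q q' : ℝ → ℝ} {p₀ x₀ : ℝ} (hPQ : PQData p p' q q' p₀ x₀) (z : ℂ)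
    {a b : ℝ} (ha : 0 ≤ a) (hb : 0 ≤ b) :
    IntervalIntegrable (fun t => ((q t : ℂ) - z)) volume a b := by
  rw [intervalIntegrable_iff]
  have h1 : IntegrableOn (fun t => (q t : ℂ)) (uIoc a b) := by
    have h2 : IntegrableOn (fun t => (q t : ℂ)) (Ioc 0 (max a b)) :=
      (q_locInt hPQ (max a b)).ofReal
    exact h2.mono_set (Ioc_subset_Ioc (le_min ha hb) le_rfl)
  exact h1.sub (integrableOn_const measure_Ioc_lt_top.ne)

/-- continuity of `p` (as a complex valued map) on `[0,∞)` -/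
lemma p_contOn {p p' q q' : ℝ → ℝ} {p₀ x₀ : ℝ} (hPQ : PQData p p' q q' p₀ x₀) :
    ContinuousOn (fun x => (p x : ℂ)) (Ici 0) := by
  have hprim : ContinuousOn (fun x => ∫ t in (0:ℝ)..x, p' t) (Ici 0) :=
    contOn_primitive_Ici (fun c _ => hPQ.p'_int.mono_set Ioc_subset_Ioi_self)
  have hp : ContinuousOn p (Ici 0) :=
    (continuousOn_const.add hprim).congr fun x hx => hPQ.p_ac x hx
  exact Complex.continuous_ofReal.comp_continuousOn hp

/-- facts about solutions: continuity of `f`, the FTC representation of `p f'`,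
and continuity of `f'` -/
lemma sol_facts {p p' q q' : ℝ → ℝ} {p₀ x₀ : ℝ} (hPQ : PQData p p' q q' p₀ x₀) (z : ℂ)
    {f f' : ℝ → ℂ} (hsol : IsSol p q z (Ici 0) f f') :
    ContinuousOn f' (Ici 0) := by
  have fcont : ContinuousOn f (Ici 0) := fun x hx => (hsol.1 x hx).continuousWithinAt
  have hrep : ∀ x ∈ Ici (0:ℝ), (p x : ℂ) * f' x
      = (p 0 : ℂ) * f' 0 + ∫ t in (0:ℝ)..x, ((q t : ℂ) - z) * f t := by
    intro x hx
    have := hsol.2 0 self_mem_Ici x hx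
    linear_combination this
  have hprim : ContinuousOn (fun x => ∫ t in (0:ℝ)..x, ((q t : ℂ) - z) * f t) (Ici 0) := by
    refine contOn_primitive_Ici fun c hc => ?_
    have : IntervalIntegrable (fun t => ((q t : ℂ) - z) * f t) volume 0 c := by
      refine (qz_II hPQ z le_rfl hc).mul_continuousOn ?_
      refine fcont.mono ?_
      rw [uIcc_of_le hc]
      exact Icc_subset_Ici_self
    rwa [intervalIntegrable_iff_integrableOn_Ioc_of_le hc] at this
  have hpf'cont : ContinuousOn (fun x => (p x : ℂ) * f' x) (Ici 0) :=
    (continuousOn_const.add hprim).congr hrep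
  have hpne : ∀ x ∈ Ici (0:ℝ), (p x : ℂ) ≠ 0 := by
    intro x hx
    simp only [ne_eq, Complex.ofReal_eq_zero]
    exact ne_of_gt (hPQ.p_pos x hx)
  have : ContinuousOn (fun x => ((p x : ℂ))⁻¹ * ((p x : ℂ) * f' x)) (Ici 0) :=
    ((p_contOn hPQ).inv₀ hpne).mul hpf'cont
  refine this.congr fun x hx => ?_
  field_simp [hpne x hx]


/-- for `Im z ≠ 0`, with `φ` the regular solution (`φ(0) = 0`, `φ'(0) = 1`),
`θ` a square-integrable solution with `w = p(0)θ(0) ≠ 0`, and `g` continuous with compact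
support, the function `f = resOp θ φ g w` satisfies `f(0) = 0`, `f` and `p·f'` are locally
absolutely continuous on `[0,∞)`, `−(pf')' + qf − zf = g` a.e. on `(0,∞)` (encoded via the
FTC representation of `p·f'`), and `f` is square integrable on `(0,∞)`. -/
theorem statement18 (p p' q q' : ℝ → ℝ) (p₀ x₀ : ℝ)
    (hPQ : PQData p p' q q' p₀ x₀)
    (z : ℂ) (hz : z.im ≠ 0)
    (φ φ' : ℝ → ℂ)
    (hsolφ : IsSol p q z (Ici 0) φ φ')
    (h0 : φ 0 = 0) (h0' : φ' 0 = 1)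
    (θ θ' : ℝ → ℂ)
    (hsolθ : IsSol p q z (Ici 0) θ θ')
    (hθL2 : IntegrableOn (fun x => ‖θ x‖ ^ 2) (Ioi (0:ℝ)))
    (hw : (p 0 : ℂ) * θ 0 ≠ 0)
    (g : ℝ → ℂ) (hg : Continuous g) (hgsupp : HasCompactSupport g) :
    resOp θ φ g ((p 0 : ℂ) * θ 0) 0 = 0 ∧
      (∃ F' : ℝ → ℂ,
        (∀ x ∈ Ici (0:ℝ),
          HasDerivWithinAt (resOp θ φ g ((p 0 : ℂ) * θ 0)) (F' x) (Ici 0) x) ∧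
        ∀ x ∈ Ici (0:ℝ), ∀ y ∈ Ici (0:ℝ),
          (p y : ℂ) * F' y - (p x : ℂ) * F' x
            = ∫ t in x..y,
                (((q t : ℂ) - z) * resOp θ φ g ((p 0 : ℂ) * θ 0) t - g t)) ∧
      IntegrableOn (fun x => ‖resOp θ φ g ((p 0 : ℂ) * θ 0) x‖ ^ 2) (Ioi (0:ℝ)) := by
  set w : ℂ := (p 0 : ℂ) * θ 0 with hwdef
  have hpcont := p_contOn hPQ
  have φcont : ContinuousOn φ (Ici 0) := fun x hx => (hsolφ.1 x hx).continuousWithinAt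
  have θcont : ContinuousOn θ (Ici 0) := fun x hx => (hsolθ.1 x hx).continuousWithinAt
  have φ'cont : ContinuousOn φ' (Ici 0) := sol_facts hPQ z hsolφ
  have θ'cont : ContinuousOn θ' (Ici 0) := sol_facts hPQ z hsolθ
  have gcont : ContinuousOn g (Ici 0) := hg.continuousOn
  -- support radius
  obtain ⟨R, hR0, hgR⟩ : ∃ R : ℝ, 0 ≤ R ∧ ∀ t, R < t → g t = 0 := by
    obtain ⟨r, hr⟩ := hgsupp.isCompact.isBounded.subset_closedBall 0
    refine ⟨max r 0, le_max_right _ _, fun t ht => ?_⟩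
    by_contra hne
    have htt : t ∈ tsupport g := subset_tsupport g hne
    have := hr htt
    rw [Metric.mem_closedBall, Real.dist_eq, sub_zero] at this
    have : t ≤ r := (abs_le.1 this).2
    have : t ≤ max r 0 := this.trans (le_max_left _ _)
    linarith
  set A : ℝ → ℂ := fun x => ∫ y in Ioi x, θ y * g y with hAdef
  set B : ℝ → ℂ := fun x => ∫ y in (0:ℝ)..x, φ y * g y with hBdef
  have θgcont : ContinuousOn (fun t => θ t * g t) (Ici 0) := θcont.mul gcont
  have φgcont : ContinuousOn (fun t => φ t * g t) (Ici 0) := φcont.mul gcont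
  have hθg_loc : ∀ b : ℝ, 0 ≤ b → IntegrableOn (fun t => θ t * g t) (Ioc 0 b) := fun b hb =>
    ((θgcont.mono (fun t (ht : t ∈ Icc (0:ℝ) b) => ht.1)).integrableOn_Icc).mono_set
      Ioc_subset_Icc_self
  have hφg_II : ∀ a b : ℝ, 0 ≤ a → 0 ≤ b →
      IntervalIntegrable (fun t => φ t * g t) volume a b := by
    intro a b ha hb
    exact (φgcont.mono fun t ht => le_trans (le_min ha hb) ht.1).intervalIntegrable
  have hθg_II : ∀ a b : ℝ, 0 ≤ a → 0 ≤ b →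
      IntervalIntegrable (fun t => θ t * g t) volume a b := by
    intro a b ha hb
    exact (θgcont.mono fun t ht => le_trans (le_min ha hb) ht.1).intervalIntegrable
  have hθg_Ioi : IntegrableOn (fun t => θ t * g t) (Ioi (0:ℝ)) := by
    have h2 : IntegrableOn (fun t => θ t * g t) (Ioi R) := by
      rw [integrableOn_congr_fun (g := fun _ => (0:ℂ))
        (fun t ht => by rw [hgR t ht, mul_zero]) measurableSet_Ioi]
      exact integrableOn_zero
    have h3 := (hθg_loc R hR0).union h2
    rwa [Ioc_union_Ioi_eq_Ioi hR0] at h3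
  -- representation of A
  have hA_rep : ∀ x ∈ Ici (0:ℝ), A x = A 0 - ∫ t in (0:ℝ)..x, θ t * g t := by
    intro x hx
    have hsplit : A 0 = (∫ t in Ioc 0 x, θ t * g t) + A x := by
      simp only [hAdef]
      rw [← Ioc_union_Ioi_eq_Ioi (hx : (0:ℝ) ≤ x),
        setIntegral_union Ioc_disjoint_Ioi_same measurableSet_Ioi (hθg_loc x hx)
          (hθg_Ioi.mono_set (Ioi_subset_Ioi hx))]
    rw [integral_of_le hx]
    linear_combination -hsplit
  -- derivative of the primitive of θ g
  have hprim : ∀ (F : ℝ → ℂ), ContinuousOn F (Ici 0) →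
      (∀ a b : ℝ, 0 ≤ a → 0 ≤ b → IntervalIntegrable F volume a b) →
      (∀ x : ℝ, 0 < x → ContinuousAt F x) →
      ∀ x ∈ Ici (0:ℝ), HasDerivWithinAt (fun u => ∫ t in (0:ℝ)..u, F t) (F x) (Ici 0) x := by
    intro F Fc FI Fca x hx
    rcases eq_or_lt_of_le (Set.mem_Ici.1 hx) with heq | hpos
    · subst heq
      refine integral_hasDerivWithinAt_right (IntervalIntegrable.refl)
        ⟨Ioi 0, self_mem_nhdsWithin,
          (Fc.mono fun t (ht : t ∈ Ioi (0:ℝ)) => Set.mem_Ici.2 (le_of_lt ht)).aestronglyMeasurable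
          measurableSet_Ioi⟩ ((Fc 0 self_mem_Ici).mono fun t ht => Set.mem_Ici.2 (le_of_lt ht))
    · have hmeas : StronglyMeasurableAtFilter F (nhds x) volume :=
        ⟨Ioi 0, Ioi_mem_nhds hpos,
          (Fc.mono fun t ht => Set.mem_Ici.2 (le_of_lt ht)).aestronglyMeasurable measurableSet_Ioi⟩
      exact (integral_hasDerivAt_right (FI 0 x le_rfl hx) hmeas (Fca x hpos)).hasDerivWithinAt
  have θca : ∀ x : ℝ, 0 < x → ContinuousAt (fun t => θ t * g t) x := fun x hxp =>
    (((hsolθ.1 x (le_of_lt hxp)).hasDerivAt (Ici_mem_nhds hxp)).continuousAt).mul hg.continuousAt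
  have φca : ∀ x : ℝ, 0 < x → ContinuousAt (fun t => φ t * g t) x := fun x hxp =>
    (((hsolφ.1 x (le_of_lt hxp)).hasDerivAt (Ici_mem_nhds hxp)).continuousAt).mul hg.continuousAt
  have hA' : ∀ x ∈ Ici (0:ℝ), HasDerivWithinAt A (-(θ x * g x)) (Ici 0) x := by
    intro x hx
    have h1 := (hprim _ θgcont hθg_II θca x hx).const_sub (A 0)
    exact h1.congr (fun y hy => hA_rep y hy) (hA_rep x hx)
  have hB' : ∀ x ∈ Ici (0:ℝ), HasDerivWithinAt B (φ x * g x) (Ici 0) x := fun x hx =>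
    hprim _ φgcont hφg_II φca x hx
  have Acont : ContinuousOn A (Ici 0) := fun x hx => (hA' x hx).continuousWithinAt
  have Bcont : ContinuousOn B (Ici 0) := fun x hx => (hB' x hx).continuousWithinAt
  -- the derivative F'
  set F' : ℝ → ℂ := fun x => w⁻¹ * (φ' x * A x) + w⁻¹ * (θ' x * B x) with hF'def
  have hfderiv : ∀ x ∈ Ici (0:ℝ), HasDerivWithinAt (resOp θ φ g w) (F' x) (Ici 0) x := by
    intro x hx
    have h1 : HasDerivWithinAt (fun u => w⁻¹ * (φ u * A u) + w⁻¹ * (θ u * B u))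
        (w⁻¹ * (φ' x * A x + φ x * -(θ x * g x)) + w⁻¹ * (θ' x * B x + θ x * (φ x * g x)))
        (Ici 0) x :=
      (((hsolφ.1 x hx).mul (hA' x hx)).const_mul w⁻¹).add
        (((hsolθ.1 x hx).mul (hB' x hx)).const_mul w⁻¹)
    have h2 : resOp θ φ g w = fun u => w⁻¹ * (φ u * A u) + w⁻¹ * (θ u * B u) := rfl
    rw [h2, hF'def]
    convert h1 using 1
    ring
  -- integrability of (q - z) * f for continuous f
  have hsolInt : ∀ (f : ℝ → ℂ), ContinuousOn f (Ici 0) → ∀ a b : ℝ, 0 ≤ a → 0 ≤ b →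
      IntervalIntegrable (fun r => ((q r : ℂ) - z) * f r) volume a b := by
    intro f fc a b ha hb
    exact (qz_II hPQ z ha hb).mul_continuousOn (fc.mono fun t ht => le_trans (le_min ha hb) ht.1)
  -- the Wronskian identity
  have hW : ∀ t ∈ Ici (0:ℝ), (p t : ℂ) * φ' t * θ t - (p t : ℂ) * θ' t * φ t = w := by
    intro t ht
    have ht0 : (0:ℝ) ≤ t := ht
    have hIcc : Icc (0:ℝ) t ⊆ Ici 0 := fun s hs => hs.1
    have huφ : ∀ s ∈ Icc (0:ℝ) t, (p s : ℂ) * φ' s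
        = (p 0 : ℂ) * φ' 0 + ∫ r in (0:ℝ)..s, ((q r : ℂ) - z) * φ r :=
      fun s hs => by linear_combination hsolφ.2 0 self_mem_Ici s (hIcc hs)
    have huθ : ∀ s ∈ Icc (0:ℝ) t, (p s : ℂ) * θ' s
        = (p 0 : ℂ) * θ' 0 + ∫ r in (0:ℝ)..s, ((q r : ℂ) - z) * θ r :=
      fun s hs => by linear_combination hsolθ.2 0 self_mem_Ici s (hIcc hs)
    have hhφ : IntegrableOn (fun r => ((q r : ℂ) - z) * φ r) (Ioc 0 t) :=
      (intervalIntegrable_iff_integrableOn_Ioc_of_le ht0).1 (hsolInt φ φcont 0 t le_rfl ht0)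
    have hhθ : IntegrableOn (fun r => ((q r : ℂ) - z) * θ r) (Ioc 0 t) :=
      (intervalIntegrable_iff_integrableOn_Ioc_of_le ht0).1 (hsolInt θ θcont 0 t le_rfl ht0)
    have E1 : (p t : ℂ) * φ' t * θ t - (p 0 : ℂ) * φ' 0 * θ 0
        = ∫ s in (0:ℝ)..t, (((q s : ℂ) - z) * (φ s * θ s) + (p s : ℂ) * φ' s * θ' s) :=
      (ibp (u := fun s => (p s : ℂ) * φ' s) (v := θ) (v' := θ')
        (h := fun r => ((q r : ℂ) - z) * φ r) ht0 huφ hhφ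
        (fun s hs => (hsolθ.1 s (hIcc hs)).mono hIcc) (θ'cont.mono hIcc)).trans
        (integral_congr fun s _ => by ring)
    have E2 : (p t : ℂ) * θ' t * φ t - (p 0 : ℂ) * θ' 0 * φ 0
        = ∫ s in (0:ℝ)..t, (((q s : ℂ) - z) * (φ s * θ s) + (p s : ℂ) * φ' s * θ' s) :=
      (ibp (u := fun s => (p s : ℂ) * θ' s) (v := φ) (v' := φ')
        (h := fun r => ((q r : ℂ) - z) * θ r) ht0 huθ hhθ
        (fun s hs => (hsolφ.1 s (hIcc hs)).mono hIcc) (φ'cont.mono hIcc)).trans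
        (integral_congr fun s _ => by ring)
    have key : (p t : ℂ) * φ' t * θ t - (p t : ℂ) * θ' t * φ t
        = (p 0 : ℂ) * φ' 0 * θ 0 - (p 0 : ℂ) * θ' 0 * φ 0 := by linear_combination E1 - E2
    rw [key, h0, h0', hwdef]
    ring
  -- the main FTC identity for ordered endpoints
  have key : ∀ x : ℝ, 0 ≤ x → ∀ y : ℝ, 0 ≤ y → x ≤ y →
      (p y : ℂ) * F' y - (p x : ℂ) * F' x
        = ∫ t in x..y, (((q t : ℂ) - z) * resOp θ φ g w t - g t) := by
    intro x hx y hy hxy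
    have hIcc : Icc x y ⊆ Ici (0:ℝ) := fun s hs => hx.trans hs.1
    have hsubI : uIcc x y ⊆ Ici (0:ℝ) := fun s hs => le_trans (le_min hx hy) hs.1
    have huφ : ∀ s ∈ Icc x y, (p s : ℂ) * φ' s
        = (p x : ℂ) * φ' x + ∫ r in x..s, ((q r : ℂ) - z) * φ r :=
      fun s hs => by linear_combination hsolφ.2 x hx s (hIcc hs)
    have huθ : ∀ s ∈ Icc x y, (p s : ℂ) * θ' s
        = (p x : ℂ) * θ' x + ∫ r in x..s, ((q r : ℂ) - z) * θ r :=
      fun s hs => by linear_combination hsolθ.2 x hx s (hIcc hs)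
    have hhφ : IntegrableOn (fun r => ((q r : ℂ) - z) * φ r) (Ioc x y) :=
      (intervalIntegrable_iff_integrableOn_Ioc_of_le hxy).1 (hsolInt φ φcont x y hx hy)
    have hhθ : IntegrableOn (fun r => ((q r : ℂ) - z) * θ r) (Ioc x y) :=
      (intervalIntegrable_iff_integrableOn_Ioc_of_le hxy).1 (hsolInt θ θcont x y hx hy)
    have E1 : (p y : ℂ) * φ' y * A y - (p x : ℂ) * φ' x * A x
        = ∫ t in x..y, (((q t : ℂ) - z) * (φ t * A t) - (p t : ℂ) * φ' t * (θ t * g t)) :=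
      (ibp (u := fun s => (p s : ℂ) * φ' s) (v := A) (v' := fun t => -(θ t * g t))
        (h := fun r => ((q r : ℂ) - z) * φ r) hxy huφ hhφ
        (fun s hs => (hA' s (hIcc hs)).mono hIcc) ((θgcont.neg).mono hIcc)).trans
        (integral_congr fun t _ => by ring)
    have E2 : (p y : ℂ) * θ' y * B y - (p x : ℂ) * θ' x * B x
        = ∫ t in x..y, (((q t : ℂ) - z) * (θ t * B t) + (p t : ℂ) * θ' t * (φ t * g t)) :=
      (ibp (u := fun s => (p s : ℂ) * θ' s) (v := B) (v' := fun t => φ t * g t)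
        (h := fun r => ((q r : ℂ) - z) * θ r) hxy huθ hhθ
        (fun s hs => (hB' s (hIcc hs)).mono hIcc) (φgcont.mono hIcc)).trans
        (integral_congr fun t _ => by ring)
    have int1 : IntervalIntegrable
        (fun t => ((q t : ℂ) - z) * (φ t * A t) - (p t : ℂ) * φ' t * (θ t * g t)) volume x y :=
      ((qz_II hPQ z hx hy).mul_continuousOn ((φcont.mul Acont).mono hsubI)).sub
        ((((hpcont.mul φ'cont).mul θgcont).mono hIcc).intervalIntegrable_of_Icc hxy)
    have int2 : IntervalIntegrable
        (fun t => ((q t : ℂ) - z) * (θ t * B t) + (p t : ℂ) * θ' t * (φ t * g t)) volume x y :=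
      ((qz_II hPQ z hx hy).mul_continuousOn ((θcont.mul Bcont).mono hsubI)).add
        ((((hpcont.mul θ'cont).mul φgcont).mono hIcc).intervalIntegrable_of_Icc hxy)
    calc (p y : ℂ) * F' y - (p x : ℂ) * F' x
        = w⁻¹ * ((p y : ℂ) * φ' y * A y - (p x : ℂ) * φ' x * A x)
          + w⁻¹ * ((p y : ℂ) * θ' y * B y - (p x : ℂ) * θ' x * B x) := by
          simp only [hF'def]; ring
      _ = w⁻¹ * (∫ t in x..y, (((q t : ℂ) - z) * (φ t * A t) - (p t : ℂ) * φ' t * (θ t * g t)))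
          + w⁻¹ * (∫ t in x..y, (((q t : ℂ) - z) * (θ t * B t) + (p t : ℂ) * θ' t * (φ t * g t))) := by
          rw [E1, E2]
      _ = ∫ t in x..y,
            (w⁻¹ * (((q t : ℂ) - z) * (φ t * A t) - (p t : ℂ) * φ' t * (θ t * g t))
            + w⁻¹ * (((q t : ℂ) - z) * (θ t * B t) + (p t : ℂ) * θ' t * (φ t * g t))) := by
          rw [← intervalIntegral.integral_const_mul, ← intervalIntegral.integral_const_mul,
            ← integral_add (int1.const_mul w⁻¹) (int2.const_mul w⁻¹)]
      _ = ∫ t in x..y, (((q t : ℂ) - z) * resOp θ φ g w t - g t) := by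
          refine integral_congr fun t ht => ?_
          have htI : t ∈ Ici (0:ℝ) := hsubI ht
          have hWt := hW t htI
          have hres : resOp θ φ g w t = w⁻¹ * (φ t * A t) + w⁻¹ * (θ t * B t) := rfl
          rw [hres]
          have hinv : w⁻¹ * w = 1 := inv_mul_cancel₀ hw
          linear_combination (-(g t) * w⁻¹) * hWt - (g t) * hinv
  -- FTC identity for arbitrary endpoints
  have keyAll : ∀ x ∈ Ici (0:ℝ), ∀ y ∈ Ici (0:ℝ),
      (p y : ℂ) * F' y - (p x : ℂ) * F' x
        = ∫ t in x..y, (((q t : ℂ) - z) * resOp θ φ g w t - g t) := by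
    intro x hx y hy
    rcases le_total x y with h | h
    · exact key x hx y hy h
    · have h1 := key y hy x hx h
      rw [integral_symm y x]
      linear_combination -h1
  -- square integrability
  have fcont : ContinuousOn (resOp θ φ g w) (Ici 0) := fun x hx =>
    (hfderiv x hx).continuousWithinAt
  have hL2 : IntegrableOn (fun x => ‖resOp θ φ g w x‖ ^ 2) (Ioi (0:ℝ)) := by
    have h1 : IntegrableOn (fun x => ‖resOp θ φ g w x‖ ^ 2) (Ioc 0 R) := by
      have hc : ContinuousOn (fun x => ‖resOp θ φ g w x‖ ^ 2) (Icc 0 R) :=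
        ((fcont.mono fun t ht => ht.1).norm).pow 2
      exact hc.integrableOn_Icc.mono_set Ioc_subset_Icc_self
    have h2 : IntegrableOn (fun x => ‖resOp θ φ g w x‖ ^ 2) (Ioi R) := by
      set c : ℂ := ∫ t in (0:ℝ)..R, φ t * g t with hcdef
      have hfeq : ∀ x ∈ Ioi R, resOp θ φ g w x = w⁻¹ * c * θ x := by
        intro x hxR
        have hx0 : (0:ℝ) ≤ x := hR0.trans (le_of_lt hxR)
        have hA0 : A x = 0 := by
          simp only [hAdef]
          rw [setIntegral_congr_fun measurableSet_Ioi
            (fun t (ht : t ∈ Ioi x) => by rw [hgR t (lt_trans hxR ht), mul_zero])]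
          exact integral_zero _ _
        have hBc : B x = c := by
          have hsplit : (∫ t in (0:ℝ)..R, φ t * g t) + ∫ t in R..x, φ t * g t
              = ∫ t in (0:ℝ)..x, φ t * g t :=
            integral_add_adjacent_intervals (hφg_II 0 R le_rfl hR0) (hφg_II R x hR0 hx0)
          have hzero : ∫ t in R..x, φ t * g t = 0 := by
            rw [integral_of_le (le_of_lt hxR),
              setIntegral_congr_fun measurableSet_Ioc
                (fun t (ht : t ∈ Ioc R x) => by rw [hgR t ht.1, mul_zero])]
            exact integral_zero _ _
          simp only [hBdef, hcdef]
          rw [← hsplit, hzero, add_zero]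
        have hres : resOp θ φ g w x = w⁻¹ * (φ x * A x) + w⁻¹ * (θ x * B x) := rfl
        rw [hres, hA0, hBc]
        ring
      have hint : IntegrableOn (fun x => ‖w⁻¹ * c‖ ^ 2 * ‖θ x‖ ^ 2) (Ioi R) :=
        (hθL2.mono_set (Ioi_subset_Ioi hR0)).const_mul _
      refine (integrableOn_congr_fun (fun x hxR => ?_) measurableSet_Ioi).2 hint
      rw [hfeq x hxR, norm_mul, mul_pow]
    have h3 := h1.union h2
    rwa [Ioc_union_Ioi_eq_Ioi hR0] at h3
  have hzero : resOp θ φ g w 0 = 0 := by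
    simp [resOp, h0]
  exact ⟨hzero, ⟨F', hfderiv, keyAll⟩, hL2⟩

end
end

section
/- Let λ > 0, p₀ > 0, K₁ > 0, K₂ > 0 be real constants, and let θ₁, θ₂ be complex-valued solutions on ℝ of the Schrödinger equation with spectral parameter λ (so conj(θ₁) and conj(θ₂) are also solutions). For solutions f, g write {f,g} for the (constant) Wronskian p(x)(f'(x)g(x) − f(x)g'(x)). Assume {θ₁, conj(θ₁)} = 2i√(p₀λ)·K₁² and {θ₂, conj(θ₂)} = −2i√(p₀λ)·K₂², and set w = {θ₂, θ₁} and 𝐰 = {θ₂, conj(θ₁)}. Then |w|² = 4p₀λ·K₁²·K₂² + |𝐰|². -/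
open MeasureTheory Filter Set Complex

noncomputable section

/-- the identity `|w|² = 4p₀λK₁²K₂² + |𝐰|²` for the Wronskians
`{θ₁, conj θ₁} = 2i√(p₀λ)K₁²`, `{θ₂, conj θ₂} = −2i√(p₀λ)K₂²`, `w = {θ₂,θ₁}`,
`𝐰 = {θ₂, conj θ₁}` of solutions on the whole line of the Schrödinger equation with
spectral parameter `λ > 0`. The Wronskian `{f,g} = p(x)(f'(x)g(x) − f(x)g'(x))` of two
solutions is constant; this is encoded by requiring the stated values at every `x`. -/
theorem statement19 (p q : ℝ → ℝ)
    (hp : Continuous p) (hppos : ∀ x : ℝ, 0 < p x)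
    (hq : MeasureTheory.LocallyIntegrable q)
    (lam p₀ K₁ K₂ : ℝ)
    (hlam : 0 < lam) (hp₀ : 0 < p₀) (hK₁ : 0 < K₁) (hK₂ : 0 < K₂)
    (θ₁ θ₁' θ₂ θ₂' : ℝ → ℂ)
    (h₁ : IsSol p q (lam : ℂ) Set.univ θ₁ θ₁')
    (h₂ : IsSol p q (lam : ℂ) Set.univ θ₂ θ₂')
    (w bw : ℂ)
    (hW₁ : ∀ x : ℝ,
      (p x : ℂ) * (θ₁' x * (starRingEnd ℂ) (θ₁ x) - θ₁ x * (starRingEnd ℂ) (θ₁' x))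
        = 2 * Complex.I * (Real.sqrt (p₀ * lam) : ℂ) * (K₁ : ℂ) ^ 2)
    (hW₂ : ∀ x : ℝ,
      (p x : ℂ) * (θ₂' x * (starRingEnd ℂ) (θ₂ x) - θ₂ x * (starRingEnd ℂ) (θ₂' x))
        = -(2 * Complex.I * (Real.sqrt (p₀ * lam) : ℂ) * (K₂ : ℂ) ^ 2))
    (hw : ∀ x : ℝ, (p x : ℂ) * (θ₂' x * θ₁ x - θ₂ x * θ₁' x) = w)
    (hbw : ∀ x : ℝ,
      (p x : ℂ) * (θ₂' x * (starRingEnd ℂ) (θ₁ x) - θ₂ x * (starRingEnd ℂ) (θ₁' x))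
        = bw) :
    ‖w‖ ^ 2 = 4 * p₀ * lam * K₁ ^ 2 * K₂ ^ 2 + ‖bw‖ ^ 2 := by
  have hx := hw 0
  have hbx := hbw 0
  have h1 := hW₁ 0
  have h2 := hW₂ 0
  have hcw : (starRingEnd ℂ) w = (p 0 : ℂ) *
      ((starRingEnd ℂ) (θ₂' 0) * (starRingEnd ℂ) (θ₁ 0)
        - (starRingEnd ℂ) (θ₂ 0) * (starRingEnd ℂ) (θ₁' 0)) := by
    rw [← hx]; simp [map_mul, map_sub]
  have hcbw : (starRingEnd ℂ) bw = (p 0 : ℂ) *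
      ((starRingEnd ℂ) (θ₂' 0) * θ₁ 0 - (starRingEnd ℂ) (θ₂ 0) * θ₁' 0) := by
    rw [← hbx]; simp [map_mul, map_sub]
  have key : w * (starRingEnd ℂ) w - bw * (starRingEnd ℂ) bw =
      ((p 0 : ℂ) * (θ₂' 0 * (starRingEnd ℂ) (θ₂ 0) - θ₂ 0 * (starRingEnd ℂ) (θ₂' 0))) *
      ((p 0 : ℂ) * (θ₁' 0 * (starRingEnd ℂ) (θ₁ 0) - θ₁ 0 * (starRingEnd ℂ) (θ₁' 0))) := by
    rw [← hx, ← hbx]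
    simp only [map_mul, map_sub, Complex.conj_conj, Complex.conj_ofReal]
    ring
  rw [h1, h2] at key
  have hs : ((Real.sqrt (p₀ * lam) : ℂ)) ^ 2 = ((p₀ * lam : ℝ) : ℂ) := by
    rw [← Complex.ofReal_pow, Real.sq_sqrt (by positivity)]
  have key2 : w * (starRingEnd ℂ) w - bw * (starRingEnd ℂ) bw =
      ((4 * p₀ * lam * K₁ ^ 2 * K₂ ^ 2 : ℝ) : ℂ) := by
    rw [key]
    have : (-(2 * Complex.I * (Real.sqrt (p₀ * lam) : ℂ) * (K₂ : ℂ) ^ 2)) *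
        (2 * Complex.I * (Real.sqrt (p₀ * lam) : ℂ) * (K₁ : ℂ) ^ 2) =
        -(Complex.I ^ 2) * 4 * ((Real.sqrt (p₀ * lam) : ℂ)) ^ 2 * (K₁ : ℂ) ^ 2 * (K₂ : ℂ) ^ 2 := by
      ring
    rw [this, Complex.I_sq, hs]
    push_cast
    ring
  rw [Complex.mul_conj, Complex.mul_conj] at key2
  have key3 : Complex.normSq w - Complex.normSq bw = 4 * p₀ * lam * K₁ ^ 2 * K₂ ^ 2 := by
    exact_mod_cast key2
  have h4 : Complex.normSq w = ‖w‖ ^ 2 := by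
    rw [Complex.normSq_eq_norm_sq]
  have h5 : Complex.normSq bw = ‖bw‖ ^ 2 := by
    rw [Complex.normSq_eq_norm_sq]
  rw [h4, h5] at key3
  linarith


end
end
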